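/- arXiv:1703.03109 — 7 statements merged into one kernel-verified Lean document; each statement's English description precedes it below -/
import Mathlib

section
/- Let q be a prime power, h(x) ∈ F_q[x] a monic polynomial of degree n, R = F_q[x]/⟨h(x)⟩, and t ≥ 2. Let C be the one-generator quasi-polycyclic code in R^t generated by (1, a_1(x), a_2(x), …, a_{t−1}(x)), viewed as an F_q-linear code of length tn (of dimension n). Then each of the t blocks of n consecutive coordinates (the natural partition) is an information set of C — i.e., C is a t-CIS code with the natural partition — if and only if gcd(a_i(x), h(x)) = 1 for every 1 ≤ i ≤ t−1, where a_i(x) denotes any polynomial representative of a_i in F_q[x]. -/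
open Polynomial

/-- For a one-generator quasi-polycyclic code `C` in `R^t`,
`R = F_q[x]/⟨h⟩`, generated by `(1, a_1, …, a_{t-1})`, viewed as an `F_q`-linear
code of length `t*n` via the coefficient identification `R ≃ F_q^n`, each of the
`t` natural blocks of `n` consecutive coordinates is an information set iff
`gcd(a_i, h) = 1` (i.e. any representative of `a_i` is coprime to `h`) for all
`1 ≤ i ≤ t-1`. -/
theorem stmt_0 (q : ℕ) (hq : IsPrimePow q) (F : Type) [Field F] [Fintype F]
    (hcard : Fintype.card F = q) (n t : ℕ) (hn : 0 < n) (ht : 2 ≤ t)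
    (h : Polynomial F) (hmon : h.Monic) (hdeg : h.natDegree = n)
    (a : Fin t → AdjoinRoot h) (ha0 : a ⟨0, by omega⟩ = 1) :
    -- the code `C_a ⊆ F_q^{t n}`, coordinates indexed by `Fin t × Fin n`
    (∀ i : Fin t,
        Set.BijOn (fun v : Fin t → Fin n → F => v i)
          {v : Fin t → Fin n → F |
            ∃ c ∈ Submodule.span (AdjoinRoot h) {a},
              ∀ (i' : Fin t) (j : Fin n),
                v i' j = (AdjoinRoot.modByMonicHom hmon (c i')).coeff (j : ℕ)}
          Set.univ)
      ↔ ∀ i : Fin t, i ≠ ⟨0, by omega⟩ →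
          ∀ p : Polynomial F, AdjoinRoot.mk h p = a i → IsCoprime p h := by
  subst hdeg
  set z : Fin t := ⟨0, by omega⟩ with hz
  let e : AdjoinRoot h ≃ₗ[F] (Fin h.natDegree → F) :=
    (AdjoinRoot.powerBasisAux' hmon).equivFun
  have he : ∀ (r : AdjoinRoot h) (j : Fin h.natDegree),
      e r j = (AdjoinRoot.modByMonicHom hmon r).coeff (j : ℕ) := by
    intro r j
    simp [e, Module.Basis.equivFun_apply]
  have hfin : Finite (AdjoinRoot h) := Finite.of_equiv _ e.symm.toEquiv
  -- membership in the code
  have hmem : ∀ v : Fin t → Fin h.natDegree → F,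
      (v ∈ {v : Fin t → Fin h.natDegree → F |
            ∃ c ∈ Submodule.span (AdjoinRoot h) {a},
              ∀ (i' : Fin t) (j : Fin h.natDegree),
                v i' j = (AdjoinRoot.modByMonicHom hmon (c i')).coeff (j : ℕ)})
        ↔ ∃ r : AdjoinRoot h, ∀ i' j, v i' j = e (r * a i') j := by
    intro v
    constructor
    · rintro ⟨c, hc, hv⟩
      obtain ⟨r, rfl⟩ := Submodule.mem_span_singleton.mp hc
      exact ⟨r, fun i' j => by rw [hv i' j, he]; rfl⟩
    · rintro ⟨r, hv⟩
      exact ⟨r • a, Submodule.mem_span_singleton.mpr ⟨r, rfl⟩,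
        fun i' j => by rw [hv i' j, he]; rfl⟩
  -- units iff coprime
  have hunit : ∀ i : Fin t, i ≠ z →
      (IsUnit (a i) ↔ ∀ p : Polynomial F, AdjoinRoot.mk h p = a i → IsCoprime p h) := by
    intro i _
    constructor
    · rintro hu p hp
      obtain ⟨b, hb⟩ := hu.exists_right_inv
      obtain ⟨u, rfl⟩ := AdjoinRoot.mk_surjective (g := h) b
      have : AdjoinRoot.mk h (p * u - 1) = 0 := by
        rw [map_sub, map_mul, hp, hb, map_one, sub_self]
      obtain ⟨d, hd⟩ := AdjoinRoot.mk_eq_zero.mp this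
      refine ⟨u, -d, ?_⟩
      have : u * p = 1 + d * h := by linear_combination hd
      rw [this]; ring
    · intro hcop
      obtain ⟨p, hp⟩ := AdjoinRoot.mk_surjective (g := h) (a i)
      obtain ⟨u, v, huv⟩ := hcop p hp
      have : AdjoinRoot.mk h u * a i = 1 := by
        have := congrArg (AdjoinRoot.mk h) huv
        simpa [hp, AdjoinRoot.mk_self] using this
      exact IsUnit.of_mul_eq_one _ (mul_comm (AdjoinRoot.mk h u) (a i) ▸ this)
  -- bijectivity of block i iff a i is a unit
  constructor
  · intro hbij i hi p hp
    refine (hunit i hi).mp ?_ p hp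
    -- surjectivity at block i yields r with r * a i = 1
    have hs := (hbij i).2.2
    obtain ⟨v, hv, hvi⟩ := hs (Set.mem_univ (fun j => e 1 j))
    obtain ⟨r, hr⟩ := (hmem v).mp hv
    have : e (r * a i) = e 1 := by
      funext j
      have := congrFun hvi j
      simp only at this
      rw [← this, hr]
    have hr1 : r * a i = 1 := e.injective this
    exact IsUnit.of_mul_eq_one _ (mul_comm r (a i) ▸ hr1)
  · intro hcop i
    have hu : IsUnit (a i) := by
      by_cases hi : i = z
      · rw [hi, ha0]; exact isUnit_one
      · exact (hunit i hi).mpr (hcop i hi)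
    obtain ⟨b, hb⟩ := hu.exists_right_inv
    refine ⟨fun _ _ => Set.mem_univ _, ?_, ?_⟩
    · -- InjOn
      intro v hv v' hv' hvv'
      obtain ⟨r, hr⟩ := (hmem v).mp hv
      obtain ⟨r', hr'⟩ := (hmem v').mp hv'
      have hee : e (r * a i) = e (r' * a i) := by
        funext j
        rw [← hr i j, ← hr' i j]
        exact congrFun hvv' j
      have hra : r * a i = r' * a i := e.injective hee
      have hrr : r = r' := by
        have := congrArg (· * b) hra
        simpa [mul_assoc, hb] using this
      funext i' j
      rw [hr i' j, hr' i' j, hrr]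
    · -- SurjOn
      intro w _
      refine ⟨fun i' j => e (e.symm w * b * a i') j, (hmem _).mpr ⟨e.symm w * b, fun _ _ => rfl⟩, ?_⟩
      funext j
      show e (e.symm w * b * a i) j = w j
      rw [mul_assoc, mul_comm b (a i), hb, mul_one, e.apply_symm_apply]
end

section
/- Let q = 2^m with m ≥ 1, and suppose C is a t-CIS linear code over F_q of length tk and dimension k, i.e., the tk coordinate positions of C admit a partition into t pairwise disjoint information sets I_1, …, I_t. Then there exists a binary (F_2-linear) t-CIS code of length mkt and dimension mk; concretely, if φ_B : F_q^{tk} → (F_2^{tk})^m is the coordinatewise expansion with respect to an F_2-basis B = {e_1,…,e_m} of F_q, then φ_B(C) is an F_2-linear code of length mtk and dimension mk whose coordinate set, indexed by {1,…,tk} × {1,…,m}, is partitioned into the t pairwise disjoint information sets I_1 × {1,…,m}, …, I_t × {1,…,m}. -/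
/-- The coordinatewise basis-expansion map as a `ZMod 2`-linear equivalence. -/
noncomputable def expandEquiv (m N : ℕ) (F : Type) [Field F]
    [Algebra (ZMod 2) F] (B : Module.Basis (Fin m) (ZMod 2) F) :
    (Fin N → F) ≃ₗ[ZMod 2] (Fin N × Fin m → ZMod 2) where
  toFun c := fun p => B.repr (c p.1) p.2
  invFun d := fun x => B.repr.symm (Finsupp.equivFunOnFinite.symm (fun j => d (x, j)))
  map_add' c c' := by funext p; simp
  map_smul' r c := by funext p; simp
  left_inv c := by
    funext x
    have : (Finsupp.equivFunOnFinite.symm fun j => (B.repr (c x)) j)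
        = B.repr (c x) := Finsupp.equivFunOnFinite_symm_coe _
    simp only [this, LinearEquiv.symm_apply_apply]
  right_inv d := by
    funext p
    show (B.repr (B.repr.symm (Finsupp.equivFunOnFinite.symm fun j => d (p.1, j)))) p.2 = d p
    rw [LinearEquiv.apply_symm_apply]
    rfl

/-- descent of CIS codes from `F_{2^m}` to `F_2`.  If `C` is a
`t`-CIS linear code over `F_q`, `q = 2^m`, of length `t*k` and dimension `k`,
with pairwise disjoint information sets `I_1, …, I_t` partitioning the
coordinates, and `B` is an `F_2`-basis of `F_q`, then the coordinatewise basis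
expansion `φ_B` carries `C` to an `F_2`-linear code of length `m*t*k` and
dimension `m*k` whose coordinates, indexed by `Fin (t*k) × Fin m`, are
partitioned into the `t` pairwise disjoint information sets `I_i × univ`. -/
theorem stmt_1 (m k t : ℕ) (hm : 1 ≤ m) (hk : 0 < k) (ht : 2 ≤ t)
    (F : Type) [Field F] [Fintype F] (hcard : Fintype.card F = 2 ^ m)
    [Algebra (ZMod 2) F] (B : Module.Basis (Fin m) (ZMod 2) F)
    (C : Submodule F (Fin (t * k) → F))
    (hdim : Module.finrank F C = k)
    (I : Fin t → Finset (Fin (t * k)))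
    (hIcard : ∀ i, (I i).card = k)
    (hpart : ∀ x : Fin (t * k), ∃! i, x ∈ I i)
    (hinfo : ∀ i, Function.Bijective
      (fun c : C => fun x : {x // x ∈ I i} => (c : Fin (t * k) → F) x.1)) :
    ∃ D : Submodule (ZMod 2) (Fin (t * k) × Fin m → ZMod 2),
      -- `D = φ_B(C)`
      (D : Set (Fin (t * k) × Fin m → ZMod 2)) =
        (fun c : Fin (t * k) → F => fun p : Fin (t * k) × Fin m =>
          B.repr (c p.1) p.2) '' (C : Set (Fin (t * k) → F)) ∧
      -- `D` has length `m*t*k` (its coordinate type has that many elements)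
      Fintype.card (Fin (t * k) × Fin m) = m * t * k ∧
      -- `D` has dimension `m*k`
      Module.finrank (ZMod 2) D = m * k ∧
      -- the sets `I_i × univ` partition the coordinates of `D`
      (∀ p : Fin (t * k) × Fin m, ∃! i,
        p ∈ I i ×ˢ (Finset.univ : Finset (Fin m))) ∧
      -- and each `I_i × univ` is an information set of `D`
      ∀ i, Function.Bijective
        (fun d : D => fun p : {p // p ∈ I i ×ˢ (Finset.univ : Finset (Fin m))} =>
          (d : Fin (t * k) × Fin m → ZMod 2) p.1) := by
  classical
  set e := expandEquiv m (t * k) F B with he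
  refine ⟨Submodule.map (e : (Fin (t*k) → F) →ₗ[ZMod 2] _)
      (C.restrictScalars (ZMod 2)), ?_, ?_, ?_, ?_, ?_⟩
  · rw [Submodule.map_coe]
    rfl
  · simp [Fintype.card_prod]; ring
  · rw [LinearEquiv.finrank_map_eq]
    have h0 : Module.finrank (ZMod 2)
        ↥(C.restrictScalars (ZMod 2)) = Module.finrank (ZMod 2) ↥C :=
      LinearEquiv.finrank_eq
        ((Submodule.restrictScalarsEquiv (ZMod 2) F (Fin (t*k) → F) C).restrictScalars (ZMod 2))
    have h1 : Module.finrank (ZMod 2) F = m := by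
      rw [Module.finrank_eq_card_basis B, Fintype.card_fin]
    have h2 : Module.finrank (ZMod 2) F * Module.finrank F ↥C
        = Module.finrank (ZMod 2) ↥C := Module.finrank_mul_finrank _ _ _
    rw [h0, ← h2, h1, hdim]
  · intro p
    obtain ⟨i, hi, hu⟩ := hpart p.1
    exact ⟨i, by simp [Finset.mem_product, hi], fun j hj => hu j (by
      simpa [Finset.mem_product] using hj)⟩
  · intro i
    constructor
    · rintro ⟨d, hd⟩ ⟨d', hd'⟩ h
      obtain ⟨c, hc, rfl⟩ := hd
      obtain ⟨c', hc', rfl⟩ := hd'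
      have hcc : c = c' := by
        have := (hinfo i).1 (a₁ := ⟨c, hc⟩) (a₂ := ⟨c', hc'⟩) ?_
        · exact congrArg Subtype.val this
        · funext x
          apply B.repr.injective
          ext j
          have hmem : (x.1, j) ∈ I i ×ˢ (Finset.univ : Finset (Fin m)) := by
            simp [Finset.mem_product, x.2]
          exact congrFun h ⟨(x.1, j), hmem⟩
      subst hcc
      rfl
    · intro g
      have hf := (hinfo i).2 (fun x : {x // x ∈ I i} =>
        B.repr.symm (Finsupp.equivFunOnFinite.symm (fun j => g ⟨(x.1, j), by
          simp [Finset.mem_product, x.2]⟩)))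
      obtain ⟨c, hc⟩ := hf
      refine ⟨⟨e c, ⟨c, c.2, rfl⟩⟩, ?_⟩
      funext p
      obtain ⟨⟨p1, p2⟩, hp⟩ := p
      have hp1 : p1 ∈ I i := by
        simpa [Finset.mem_product] using hp
      have hcp : (c : Fin (t*k) → F) p1
          = B.repr.symm (Finsupp.equivFunOnFinite.symm (fun j => g ⟨(p1, j), by
              simp [Finset.mem_product, hp1]⟩)) := congrFun hc ⟨p1, hp1⟩
      show e c (p1, p2) = g ⟨(p1, p2), hp⟩
      have h1 : e c (p1, p2) = B.repr ((c : Fin (t*k) → F) p1) p2 := rfl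
      rw [h1, hcp, LinearEquiv.apply_symm_apply]
      rfl
end

section
/- Let q be a prime power and let h(x) ∈ F_q[x] be a monic polynomial of degree n that is the product of r pairwise distinct monic irreducible polynomials each of equal degree n/r. Let R = F_q[x]/⟨h(x)⟩ and t ≥ 2. If b = (b_0, b_1, …, b_{t−1}) ∈ R^t is nonzero, then the number of tuples a = (a_1, …, a_{t−1}) ∈ R^{t−1} consisting of units of R such that b belongs to the R-submodule C_a of R^t generated by (1, a_1, …, a_{t−1}) is at most (q^{n/r} − 1)^{(t−1)(r−1)}. -/
open Polynomial

lemma aux_unit {F : Type} [Field F] (g : Polynomial F) (hg : Irreducible g)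
    (x : AdjoinRoot g) : IsUnit x ↔ x ≠ 0 := by
  haveI : Fact (Irreducible g) := ⟨hg⟩
  exact isUnit_iff_ne_zero

/-- let `h ∈ F_q[x]` be monic of degree `n`, a product of `r`
pairwise distinct monic irreducible polynomials each of degree `n/r = m`, and
`R = F_q[x]/⟨h⟩`.  If `b ∈ R^t` is nonzero, then the number of generating
tuples `(1, a_1, …, a_{t-1})` with all `a_i` units of `R` whose generated
`R`-submodule `C_a ⊆ R^t` contains `b` is at most `(q^{n/r} - 1)^{(t-1)(r-1)}`. -/
theorem stmt_6 (q : ℕ) (hq : IsPrimePow q) (F : Type) [Field F] [Fintype F]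
    (hcard : Fintype.card F = q) (n t r m : ℕ) (hn : 0 < n) (ht : 2 ≤ t)
    (hr : 0 < r) (hnrm : n = r * m)
    (h : Polynomial F) (hmon : h.Monic) (hdeg : h.natDegree = n)
    (f : Fin r → Polynomial F) (hinj : Function.Injective f)
    (hfmon : ∀ i, (f i).Monic) (hfirr : ∀ i, Irreducible (f i))
    (hfdeg : ∀ i, (f i).natDegree = m) (hfac : h = ∏ i, f i)
    (b : Fin t → AdjoinRoot h) (hb : b ≠ 0) :
    Nat.card {a : Fin t → AdjoinRoot h //
        a ⟨0, by omega⟩ = 1 ∧ (∀ i, i ≠ ⟨0, by omega⟩ → IsUnit (a i)) ∧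
        b ∈ Submodule.span (AdjoinRoot h) {a}} ≤
      (q ^ m - 1) ^ ((t - 1) * (r - 1)) := by
  set z : Fin t := ⟨0, by omega⟩ with hz
  set S := {a : Fin t → AdjoinRoot h //
        a z = 1 ∧ (∀ i, i ≠ z → IsUnit (a i)) ∧
        b ∈ Submodule.span (AdjoinRoot h) {a}} with hS
  show Nat.card S ≤ _
  rcases isEmpty_or_nonempty S with hemp | hne
  · simp [Nat.card_of_isEmpty]
  -- key: for a ∈ S, b j = b z * a j
  have key : ∀ a : S, ∀ j, b j = b z * (a : Fin t → AdjoinRoot h) j := by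
    rintro ⟨a, ha1, -, hmem⟩ j
    rw [Submodule.mem_span_singleton] at hmem
    obtain ⟨c, hc⟩ := hmem
    have hj : c * a j = b j := by
      have := congrFun hc j; simpa [Pi.smul_apply, smul_eq_mul] using this
    have hzc : c = b z := by
      have := congrFun hc z; simpa [Pi.smul_apply, smul_eq_mul, ha1] using this
    rw [← hj, hzc]
  -- b z ≠ 0
  have hbz : b z ≠ 0 := by
    intro h0
    apply hb
    funext j
    rw [key hne.some j, h0, zero_mul, Pi.zero_apply]
  -- coprimality
  have hcopf : ∀ (i j : Fin r), i ≠ j → IsCoprime (f i) (f j) := by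
    intro i j hij
    rw [(hfirr i).coprime_iff_not_dvd]
    intro hdvd
    exact hij (hinj (eq_of_monic_of_associated (hfmon i) (hfmon j)
      ((hfirr i).associated_of_dvd (hfirr j) hdvd)))
  have hcop : Pairwise (Function.onFun IsCoprime fun i => Ideal.span ({f i} : Set (Polynomial F))) := by
    intro i j hij
    rw [Function.onFun, Ideal.isCoprime_span_singleton_iff]
    exact hcopf i j hij
  have hspan : Ideal.span ({h} : Set (Polynomial F)) = ⨅ i, Ideal.span {f i} := by
    rw [hfac]
    exact (Ideal.iInf_span_singleton hcopf).symm
  -- CRT equivalence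
  let e : AdjoinRoot h ≃+* ∀ i, AdjoinRoot (f i) :=
    (Ideal.quotEquivOfEq hspan).trans (Ideal.quotientInfRingEquivPiQuotient _ hcop)
  -- units in components
  have hunit : ∀ (i : Fin r) (x : AdjoinRoot (f i)),
      IsUnit x ↔ x ≠ 0 := fun i x => aux_unit (f i) (hfirr i) x
  -- cardinality of components
  have hfinK : ∀ i : Fin r, Fintype (AdjoinRoot (f i)) := by
    intro i
    exact Module.fintypeOfFintype (AdjoinRoot.powerBasis (hfmon i).ne_zero).basis
  have hcardK : ∀ i : Fin r,
      Nat.card (AdjoinRoot (f i)) = q ^ m := by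
    intro i
    letI := hfinK i
    rw [Nat.card_eq_fintype_card]
    rw [Module.card_fintype (AdjoinRoot.powerBasis (hfmon i).ne_zero).basis]
    simp only [AdjoinRoot.powerBasis, Fintype.card_fin, hcard, hfdeg i]
  haveI : ∀ i : Fin r, Finite (AdjoinRoot (f i)) :=
    fun i => @Finite.of_fintype _ (hfinK i)
  -- index where e (b z) is nonzero
  have hebz : e (b z) ≠ 0 := by
    intro h0
    exact hbz (by simpa using e.injective (h0.trans (map_zero e).symm))
  obtain ⟨i0, hi0⟩ : ∃ i0, e (b z) i0 ≠ 0 := by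
    by_contra hcon
    push_neg at hcon
    exact hebz (funext hcon)
  -- the injection
  let T := {j : Fin t // j ≠ z} → ∀ i : {i : Fin r // i ≠ i0},
      {x : AdjoinRoot (f (i : Fin r)) // x ≠ 0}
  let Φ : S → T := fun a j i =>
    ⟨e ((a : S).1 j) i, by
      have hu : IsUnit ((a : S).1 (j : Fin t)) := a.2.2.1 j j.2
      have : IsUnit (e ((a : S).1 j) i) :=
        (hu.map e.toRingHom).map (Pi.evalRingHom _ (i : Fin r))
      exact (hunit _ _).mp this⟩
  have hΦ : Function.Injective Φ := by
    rintro a a' hEq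
    apply Subtype.ext
    funext j
    rcases eq_or_ne j z with hj | hj
    · rw [hj, a.2.1, a'.2.1]
    · apply e.injective
      funext i
      rcases eq_or_ne i i0 with hi | hi
      · subst hi
        have h1 : e (b z) i * e (a.1 j) i = e (b j) i := by
          have : b z * a.1 j = b j := (key a j).symm
          have := congrFun (congrArg e this.symm)  i
          simpa [map_mul] using (congrFun (congrArg e ((key a j))) i).symm
        have h2 : e (b z) i * e (a'.1 j) i = e (b j) i := by
          simpa [map_mul] using (congrFun (congrArg e ((key a' j))) i).symm
        exact ((hunit i _).mpr hi0).mul_left_cancel (h1.trans h2.symm)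
      · have := congrFun (congrFun hEq ⟨j, hj⟩) ⟨i, hi⟩
        exact Subtype.ext_iff.mp this
  have hfinT : Finite T := by infer_instance
  calc Nat.card S ≤ Nat.card T := Nat.card_le_card_of_injective Φ hΦ
    _ ≤ (q ^ m - 1) ^ ((t - 1) * (r - 1)) := by
      rw [Nat.card_fun]
      have h1 : ∀ i : {i : Fin r // i ≠ i0},
          Nat.card {x : AdjoinRoot (f (i : Fin r)) // x ≠ 0}
            = q ^ m - 1 := by
        intro i
        letI := hfinK (i : Fin r)
        rw [Nat.card_eq_fintype_card, Fintype.card_subtype_compl, Fintype.card_subtype_eq]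
        rw [← Nat.card_eq_fintype_card, hcardK]
      rw [Nat.card_pi]
      simp only [h1]
      rw [Finset.prod_const, Finset.card_univ]
      have hc1 : Fintype.card {i : Fin r // i ≠ i0} = r - 1 := by
        rw [Fintype.card_subtype_compl, Fintype.card_subtype_eq, Fintype.card_fin]
      have hc2 : Nat.card {j : Fin t // j ≠ z} = t - 1 := by
        rw [Nat.card_eq_fintype_card, Fintype.card_subtype_compl, Fintype.card_subtype_eq,
          Fintype.card_fin]
      rw [hc1, hc2, ← pow_mul, Nat.mul_comm]
end

section
/- Let q be a prime power, t ≥ 2, and let h(x) ∈ F_q[x] be a monic polynomial of degree n that is a product of r pairwise distinct monic irreducible polynomials of equal degree m = n/r. Let R = F_q[x]/⟨h(x)⟩ and let d be a positive integer. If (q^m − 1)^{(t−1)(r−1)} · #{ v ∈ F_q^{tn} : 0 < wt(v) < d } < (q^m − 1)^{(t−1)r}, where wt denotes Hamming weight and F_q^{tn} is identified with R^t via coefficients, then there exists a tuple (a_1, …, a_{t−1}) of units of R such that every nonzero codeword of the one-generator quasi-polycyclic t-CIS code C_a generated by (1, a_1, …, a_{t−1}) has Hamming weight at least d. -/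
open Polynomial

/-- The Hamming weight of an element of `R^t`, `R = F_q[x]/⟨h⟩` with `h` monic,
under the identification of `R` with `F_q^n` via the coefficients of the
canonical representative of degree `< n`. -/
noncomputable def qpcWeight {F : Type*} [CommRing F] {h : Polynomial F}
    (hmon : h.Monic) {t : ℕ} (c : Fin t → AdjoinRoot h) : ℕ :=
  ∑ i, (AdjoinRoot.modByMonicHom hmon (c i)).support.card


lemma pi_isUnit_iff {ι : Type*} {M : ι → Type*} [∀ i, Monoid (M i)] {x : ∀ i, M i} :
    IsUnit x ↔ ∀ i, IsUnit (x i) := by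
  constructor
  · rintro ⟨u, rfl⟩ i
    exact ⟨⟨u.val i, u.inv i, congrFun u.val_inv i, congrFun u.inv_val i⟩, rfl⟩
  · intro hx
    refine ⟨⟨x, fun i => ↑(hx i).unit⁻¹, ?_, ?_⟩, rfl⟩ <;> funext i
    · show x i * ↑(hx i).unit⁻¹ = 1
      have h1 : (↑(hx i).unit : M i) = x i := (hx i).unit_spec
      calc x i * ↑(hx i).unit⁻¹ = ↑(hx i).unit * ↑(hx i).unit⁻¹ := by rw [h1]
        _ = 1 := Units.mul_inv _
    · show ↑(hx i).unit⁻¹ * x i = 1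
      have h1 : (↑(hx i).unit : M i) = x i := (hx i).unit_spec
      calc ↑(hx i).unit⁻¹ * x i = ↑(hx i).unit⁻¹ * ↑(hx i).unit := by rw [h1]
        _ = 1 := Units.inv_mul _

lemma card_isUnit_field (K : Type*) [Field K] [Fintype K] :
    Nat.card {x : K // IsUnit x} = Fintype.card K - 1 := by
  classical
  rw [Nat.card_eq_fintype_card]
  calc Fintype.card {x : K // IsUnit x}
      = Fintype.card {x : K // ¬ x = 0} :=
        Fintype.card_congr (Equiv.subtypeEquivRight fun x => by simp [isUnit_iff_ne_zero])
    _ = Fintype.card K - Fintype.card {x : K // x = 0} := Fintype.card_subtype_compl _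
    _ = Fintype.card K - 1 := by rw [Fintype.card_subtype_eq]

lemma pi_card_isUnit {ι : Type*} [Fintype ι] {K : ι → Type*} [∀ i, Field (K i)]
    [∀ i, Fintype (K i)] {k : ℕ} (hk : ∀ i, Fintype.card (K i) = k) :
    Nat.card {x : ∀ i, K i // IsUnit x} = (k - 1) ^ Fintype.card ι := by
  classical
  have e : {x : ∀ i, K i // IsUnit x} ≃ ∀ i, {y : K i // IsUnit y} :=
    (Equiv.subtypeEquivRight fun x => pi_isUnit_iff).trans (Equiv.subtypePiEquivPi)
  rw [Nat.card_congr e, Nat.card_pi]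
  simp [card_isUnit_field, hk, Finset.prod_const, Finset.card_univ]

lemma pi_solcount {ι : Type*} [Fintype ι] {K : ι → Type*} [∀ i, Field (K i)]
    [∀ i, Fintype (K i)] {k : ℕ} (hk : ∀ i, Fintype.card (K i) = k)
    {x y : ∀ i, K i} (hx : x ≠ 0) :
    Nat.card {u : ∀ i, K i // IsUnit u ∧ x * u = y} ≤ (k - 1) ^ (Fintype.card ι - 1) := by
  classical
  obtain ⟨j, hj⟩ : ∃ j, x j ≠ 0 := by
    by_contra hc; push_neg at hc; exact hx (funext hc)
  have hinj : Function.Injective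
      (fun (u : {u : ∀ i, K i // IsUnit u ∧ x * u = y}) (i : {i : ι // i ≠ j}) =>
        (⟨u.1 i.1, (pi_isUnit_iff.mp u.2.1) i.1⟩ : {z : K i.1 // IsUnit z})) := by
    intro u v huv
    apply Subtype.ext; funext i
    by_cases hi : i = j
    · subst hi
      have hu := congrFun u.2.2 i
      have hv := congrFun v.2.2 i
      simp only [Pi.mul_apply] at hu hv
      exact mul_left_cancel₀ hj (hu.trans hv.symm)
    · exact congrArg Subtype.val (congrFun huv ⟨i, hi⟩)
  calc Nat.card {u : ∀ i, K i // IsUnit u ∧ x * u = y}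
      ≤ Nat.card (∀ i : {i : ι // i ≠ j}, {z : K i.1 // IsUnit z}) :=
        Nat.card_le_card_of_injective _ hinj
    _ = (k - 1) ^ (Fintype.card ι - 1) := by
        rw [Nat.card_pi]
        have hcs : Fintype.card {i : ι // i ≠ j} = Fintype.card ι - 1 := by
          have := Fintype.card_subtype_compl (fun i : ι => i = j)
          simpa [Fintype.card_subtype_eq] using this
        simp [card_isUnit_field, hk, Finset.prod_const, Finset.card_univ, hcs]


lemma expurgation {R : Type*} [CommRing R] [Fintype R] {t : ℕ} (i₀ : Fin t)
    (w : (Fin t → R) → ℕ) (d B : ℕ)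
    (hB : ∀ x y : R, x ≠ 0 → Nat.card {u : R // IsUnit u ∧ x * u = y} ≤ B)
    (hlt : B ^ (t - 1) * Nat.card {b : Fin t → R // b ≠ 0 ∧ w b < d} <
      Nat.card {x : R // IsUnit x} ^ (t - 1)) :
    ∃ a : Fin t → R, a i₀ = 1 ∧ (∀ i, i ≠ i₀ → IsUnit (a i)) ∧
      ∀ c ∈ Submodule.span R {a}, c ≠ 0 → d ≤ w c := by
  classical
  have hcard_t : Fintype.card {i : Fin t // i ≠ i₀} = t - 1 := by
    have := Fintype.card_subtype_compl (fun i : Fin t => i = i₀)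
    simpa [Fintype.card_subtype_eq] using this
  set P : (Fin t → R) → Prop := fun a => a i₀ = 1 ∧ ∀ i, i ≠ i₀ → IsUnit (a i) with hP
  -- cardinality of the good set
  have hScard : Nat.card {a : Fin t → R // P a} = Nat.card {x : R // IsUnit x} ^ (t - 1) := by
    have E : {a : Fin t → R // P a} ≃ ({i : Fin t // i ≠ i₀} → {x : R // IsUnit x}) :=
      { toFun := fun a i => ⟨a.1 i.1, a.2.2 i.1 i.2⟩
        invFun := fun g =>
          ⟨fun i => if hi : i = i₀ then 1 else (g ⟨i, hi⟩).1,
            by simp, fun i hi => by simpa [dif_neg hi] using (g ⟨i, hi⟩).2⟩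
        left_inv := fun a => by
          apply Subtype.ext; funext i
          by_cases hi : i = i₀
          · subst hi; simpa using a.2.1.symm
          · simp [dif_neg hi]
        right_inv := fun g => by
          funext i
          apply Subtype.ext
          simp [dif_neg i.2] }
    rw [Nat.card_congr E, Nat.card_fun, Nat.card_eq_fintype_card (α := {i : Fin t // i ≠ i₀}),
      hcard_t]
  -- Finsets
  set Sg : Finset (Fin t → R) := Finset.univ.filter P with hSg
  set Bad : Finset (Fin t → R) := Finset.univ.filter (fun b => b ≠ 0 ∧ w b < d) with hBad
  set Cov : Finset (Fin t → R) :=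
    Sg.filter (fun a => ∃ b ∈ Bad, b ∈ Submodule.span R {a}) with hCov
  have hsub : Cov ⊆ Bad.biUnion (fun b => Sg.filter (fun a => b ∈ Submodule.span R {a})) := by
    intro a ha
    simp only [hCov, Finset.mem_filter, Finset.mem_biUnion] at ha ⊢
    obtain ⟨haS, b, hb, hmem⟩ := ha
    exact ⟨b, hb, haS, hmem⟩
  -- per-b bound
  have h2 : ∀ b ∈ Bad, (Sg.filter (fun a => b ∈ Submodule.span R {a})).card ≤ B ^ (t - 1) := by
    intro b hb
    simp only [hBad, Finset.mem_filter, Finset.mem_univ, true_and] at hb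
    have hcardeq : (Sg.filter (fun a => b ∈ Submodule.span R {a})).card =
        Nat.card {a : Fin t → R // P a ∧ b ∈ Submodule.span R {a}} := by
      rw [Nat.card_eq_fintype_card, Fintype.card_subtype, hSg, Finset.filter_filter]
    rw [hcardeq]
    rcases isEmpty_or_nonempty {a : Fin t → R // P a ∧ b ∈ Submodule.span R {a}} with hE | hNE
    · simp [Nat.card_of_isEmpty]
    · have key : ∀ (a : Fin t → R), P a → b ∈ Submodule.span R {a} →
          ∀ i, b i₀ * a i = b i := by
        intro a hPa hmem i
        obtain ⟨s, hs⟩ := Submodule.mem_span_singleton.mp hmem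
        have hs0 : s = b i₀ := by
          have := congrFun hs i₀
          simpa [hPa.1] using this
        have := congrFun hs i
        simpa [hs0] using this
      have hb0 : b i₀ ≠ 0 := by
        obtain ⟨a₀⟩ := hNE
        intro h0
        obtain ⟨s, hs⟩ := Submodule.mem_span_singleton.mp a₀.2.2
        have hs0 : s = b i₀ := by
          have := congrFun hs i₀
          simpa [a₀.2.1.1] using this
        exact hb.1 (by rw [← hs, hs0, h0, zero_smul])
      have hinj : Function.Injective
          (fun (a : {a : Fin t → R // P a ∧ b ∈ Submodule.span R {a}})
              (i : {i : Fin t // i ≠ i₀}) =>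
            (⟨a.1 i.1, a.2.1.2 i.1 i.2, key a.1 a.2.1 a.2.2 i.1⟩ :
              {u : R // IsUnit u ∧ b i₀ * u = b i.1})) := by
        intro u v huv
        apply Subtype.ext; funext i
        by_cases hi : i = i₀
        · subst hi; rw [u.2.1.1, v.2.1.1]
        · exact congrArg Subtype.val (congrFun huv ⟨i, hi⟩)
      calc Nat.card {a : Fin t → R // P a ∧ b ∈ Submodule.span R {a}}
          ≤ Nat.card (∀ i : {i : Fin t // i ≠ i₀}, {u : R // IsUnit u ∧ b i₀ * u = b i.1}) :=
            Nat.card_le_card_of_injective _ hinj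
        _ = ∏ i : {i : Fin t // i ≠ i₀}, Nat.card {u : R // IsUnit u ∧ b i₀ * u = b i.1} :=
            Nat.card_pi
        _ ≤ ∏ _i : {i : Fin t // i ≠ i₀}, B :=
            Finset.prod_le_prod' (fun i _ => hB (b i₀) (b i.1) hb0)
        _ = B ^ (t - 1) := by rw [Finset.prod_const, Finset.card_univ, hcard_t]
  have h3 : Cov.card < Sg.card := by
    have hc1 : Cov.card ≤ Bad.card * B ^ (t - 1) := by
      refine (Finset.card_le_card hsub).trans ?_
      refine (Finset.card_biUnion_le).trans ?_
      calc ∑ b ∈ Bad, (Sg.filter (fun a => b ∈ Submodule.span R {a})).card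
          ≤ ∑ _b ∈ Bad, B ^ (t - 1) := Finset.sum_le_sum h2
        _ = Bad.card * B ^ (t - 1) := by rw [Finset.sum_const, smul_eq_mul]
    have hBadcard : Bad.card = Nat.card {b : Fin t → R // b ≠ 0 ∧ w b < d} := by
      rw [Nat.card_eq_fintype_card, Fintype.card_subtype]
    have hSgcard : Sg.card = Nat.card {x : R // IsUnit x} ^ (t - 1) := by
      rw [← hScard, Nat.card_eq_fintype_card, Fintype.card_subtype]
    rw [hSgcard]
    calc Cov.card ≤ Bad.card * B ^ (t - 1) := hc1
      _ = B ^ (t - 1) * Nat.card {b : Fin t → R // b ≠ 0 ∧ w b < d} := by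
          rw [hBadcard, Nat.mul_comm]
      _ < _ := hlt
  have hne : (Sg \ Cov).Nonempty := by
    rw [← Finset.card_pos, Finset.card_sdiff_of_subset (show Cov ⊆ Sg from Finset.filter_subset _ _)]
    exact Nat.sub_pos_of_lt h3
  obtain ⟨a, ha⟩ := hne
  rw [Finset.mem_sdiff] at ha
  have hPa : P a := by
    have := ha.1
    simp only [hSg, Finset.mem_filter, Finset.mem_univ, true_and] at this
    exact this
  refine ⟨a, hPa.1, hPa.2, fun c hc hc0 => ?_⟩
  by_contra hwc
  push_neg at hwc
  apply ha.2
  simp only [hCov, Finset.mem_filter]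
  exact ⟨ha.1, c, by simp [hBad, hc0, hwc], hc⟩

/-- expurgation argument: let `h ∈ F_q[x]` be monic of degree
`n`, a product of `r` pairwise distinct monic irreducible polynomials of equal
degree `m = n/r`, `R = F_q[x]/⟨h⟩`, and `d > 0`.  If
`(q^m − 1)^{(t−1)(r−1)} · #{v ∈ F_q^{tn} : 0 < wt(v) < d} < (q^m − 1)^{(t−1)r}`
(identifying `F_q^{tn}` with `R^t` via coefficients), then some unit tuple
`(a_1, …, a_{t-1})` yields a one-generator quasi-polycyclic `t`-CIS code all of
whose nonzero codewords have Hamming weight at least `d`. -/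
theorem stmt_9 (q : ℕ) (hq : IsPrimePow q) (F : Type) [Field F] [Fintype F]
    (hcard : Fintype.card F = q) (n t r m : ℕ) (hn : 0 < n) (ht : 2 ≤ t)
    (hr : 0 < r) (hnrm : n = r * m)
    (h : Polynomial F) (hmon : h.Monic) (hdeg : h.natDegree = n)
    (f : Fin r → Polynomial F) (hinj : Function.Injective f)
    (hfmon : ∀ i, (f i).Monic) (hfirr : ∀ i, Irreducible (f i))
    (hfdeg : ∀ i, (f i).natDegree = m) (hfac : h = ∏ i, f i)
    (d : ℕ) (hd : 0 < d)
    (hcount : (q ^ m - 1) ^ ((t - 1) * (r - 1)) *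
        Nat.card {b : Fin t → AdjoinRoot h // b ≠ 0 ∧ qpcWeight hmon b < d} <
      (q ^ m - 1) ^ ((t - 1) * r)) :
    ∃ a : Fin t → AdjoinRoot h,
      a ⟨0, by omega⟩ = 1 ∧ (∀ i, i ≠ ⟨0, by omega⟩ → IsUnit (a i)) ∧
      ∀ c ∈ Submodule.span (AdjoinRoot h) {a}, c ≠ 0 → d ≤ qpcWeight hmon c := by
  classical
  haveI facts : ∀ i, Fact (Irreducible (f i)) := fun i => ⟨hfirr i⟩
  have hfne : ∀ i, f i ≠ 0 := fun i => (hfmon i).ne_zero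
  letI instK : ∀ i, Fintype (AdjoinRoot (f i)) := fun i =>
    Module.fintypeOfFintype (AdjoinRoot.powerBasis (hfne i)).basis
  have hKcard : ∀ i, Fintype.card (AdjoinRoot (f i)) = q ^ m := fun i => by
    rw [Module.card_fintype (AdjoinRoot.powerBasis (hfne i)).basis, hcard]
    simp [AdjoinRoot.powerBasis, hfdeg i]
  letI instR : Fintype (AdjoinRoot h) :=
    Module.fintypeOfFintype (AdjoinRoot.powerBasis hmon.ne_zero).basis
  -- coprimality and CRT
  have hcop0 : ∀ i j : Fin r, i ≠ j → IsCoprime (f i) (f j) := by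
    intro i j hij
    refine (hfirr i).coprime_iff_not_dvd.mpr (fun hdvd => hij ?_)
    exact hinj (Polynomial.eq_of_monic_of_associated (hfmon i) (hfmon j)
      ((hfirr i).associated_of_dvd (hfirr j) hdvd))
  have hcop : Pairwise (Function.onFun IsCoprime fun i => Ideal.span ({f i} : Set (Polynomial F))) := by
    intro i j hij
    rw [Function.onFun, Ideal.isCoprime_span_singleton_iff]
    exact hcop0 i j hij
  have hspan : Ideal.span ({h} : Set (Polynomial F)) = ⨅ i, Ideal.span {f i} := by
    rw [hfac]
    exact (Ideal.iInf_span_singleton hcop0).symm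
  let e : AdjoinRoot h ≃+* ∀ i, AdjoinRoot (f i) :=
    (Ideal.quotEquivOfEq hspan).trans (Ideal.quotientInfRingEquivPiQuotient _ hcop)
  -- transported cardinalities
  have hU : Nat.card {x : AdjoinRoot h // IsUnit x} = (q ^ m - 1) ^ r := by
    have E : {x : AdjoinRoot h // IsUnit x} ≃ {x : ∀ i, AdjoinRoot (f i) // IsUnit x} :=
      e.toEquiv.subtypeEquiv (fun x => ⟨fun hx => hx.map e,
        fun hx => by simpa using hx.map e.symm⟩)
    rw [Nat.card_congr E, pi_card_isUnit hKcard, Fintype.card_fin]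
  have hsol : ∀ x y : AdjoinRoot h, x ≠ 0 →
      Nat.card {u : AdjoinRoot h // IsUnit u ∧ x * u = y} ≤ (q ^ m - 1) ^ (r - 1) := by
    intro x y hx
    have E : {u : AdjoinRoot h // IsUnit u ∧ x * u = y} ≃
        {v : ∀ i, AdjoinRoot (f i) // IsUnit v ∧ e x * v = e y} :=
      e.toEquiv.subtypeEquiv (fun u => by
        show (IsUnit u ∧ x * u = y) ↔ (IsUnit (e u) ∧ e x * e u = e y)
        constructor
        · rintro ⟨h1, h2⟩
          exact ⟨h1.map e, by rw [← map_mul, h2]⟩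
        · rintro ⟨h1, h2⟩
          refine ⟨by simpa using h1.map e.symm, ?_⟩
          apply e.injective
          rw [map_mul]; exact h2)
    have hex : e x ≠ 0 := fun h0 => hx (by simpa using congrArg e.symm h0)
    rw [Nat.card_congr E]
    have := pi_solcount hKcard (y := e y) hex
    simpa [Fintype.card_fin] using this
  have hlt : ((q ^ m - 1) ^ (r - 1)) ^ (t - 1) *
      Nat.card {b : Fin t → AdjoinRoot h // b ≠ 0 ∧ qpcWeight hmon b < d} <
      Nat.card {x : AdjoinRoot h // IsUnit x} ^ (t - 1) := by
    rw [hU, ← pow_mul, ← pow_mul, Nat.mul_comm (r - 1) (t - 1), Nat.mul_comm r (t - 1)]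
    exact hcount
  exact expurgation ⟨0, by omega⟩ (qpcWeight hmon) d _ hsol hlt
end

section
/- Fix a prime power q, an integer t ≥ 2, an element α ∈ F_q^*, and a real number δ with 0 < δ < (q−1)/q and H_q(δ) < (t−1)/t. Suppose that x^n − α is irreducible in F_q[x] for infinitely many positive integers n. Then for infinitely many such n there exists a tuple (a_1, …, a_{t−1}) of units of R = F_q[x]/⟨x^n − α⟩ such that the one-generator quasi-twisted t-CIS code C_a generated by (1, a_1, …, a_{t−1}) — an F_q-linear code of length tn, dimension n, and rate 1/t — has minimum Hamming distance at least δ·tn. -/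
open Polynomial

/-- The `q`-ary entropy function. -/
noncomputable def qaryEntropy (q : ℕ) (y : ℝ) : ℝ :=
  y * Real.logb q ((q : ℝ) - 1) - y * Real.logb q y - (1 - y) * Real.logb q (1 - y)

open Finset in
lemma ball_card_le {F : Type*} [Field F] [Fintype F] [DecidableEq F] {q : ℕ}
    (hcard : Fintype.card F = q) (hq2 : 2 ≤ q) {p : ℝ} (hp0 : 0 < p)
    (hpq : p ≤ ((q:ℝ)-1)/q) (ι : Type*) [Fintype ι] [DecidableEq ι]
    (B : Finset (ι → F))
    (hB : ∀ u ∈ B, ((univ.filter fun i => u i ≠ 0).card : ℝ) ≤ p * (Fintype.card ι)) :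
    (B.card : ℝ) ≤ (q:ℝ) ^ ((Fintype.card ι : ℝ) * qaryEntropy q p) := by
  set m := Fintype.card ι with hm
  have hq1 : (1:ℝ) < q := by exact_mod_cast Nat.lt_of_lt_of_le Nat.one_lt_two hq2
  set s : ℝ := (q:ℝ) - 1 with hsdef
  have hs0 : (0:ℝ) < s := by simp only [hsdef]; linarith
  have hq0 : (0:ℝ) < q := by linarith
  have hp1 : p < 1 := lt_of_le_of_lt hpq (by rw [div_lt_one hq0]; linarith)
  have h1p : (0:ℝ) < 1 - p := by linarith
  set r : ℝ := p / (s * (1-p)) with hrdef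
  have hr0 : 0 < r := div_pos hp0 (mul_pos hs0 h1p)
  have hr1 : r ≤ 1 := by
    rw [hrdef, div_le_one (mul_pos hs0 h1p)]
    have := (le_div_iff₀ hq0).mp hpq
    nlinarith
  set f : F → ℝ := fun x => if x = 0 then 1 - p else p / s with hfdef
  have hf0 : ∀ x, 0 ≤ f x := by
    intro x
    by_cases h : x = 0
    · simp only [hfdef, if_pos h]; linarith
    · simp only [hfdef, if_neg h]; positivity
  have hsum1 : ∑ x : F, f x = 1 := by
    rw [Finset.sum_ite, Finset.sum_const, Finset.sum_const]
    have h1 : (univ.filter fun x : F => x = 0) = {0} := by ext x; simp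
    have h2 : (univ.filter fun x : F => ¬ x = 0).card = q - 1 := by
      rw [Finset.filter_not, Finset.card_sdiff_of_subset (Finset.filter_subset _ _), h1]
      simp [hcard]
    rw [h1, h2]
    have h3 : ((q - 1 : ℕ) : ℝ) = s := by
      rw [hsdef, Nat.cast_sub (by omega)]; simp
    simp only [Finset.card_singleton, one_smul, nsmul_eq_mul, h3]
    field_simp
    ring
  set θ : ℝ := (1-p) ^ (m:ℝ) * r ^ (p*(m:ℝ)) with hθdef
  have hθ0 : 0 < θ := mul_pos (Real.rpow_pos_of_pos h1p _) (Real.rpow_pos_of_pos hr0 _)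
  have hkey : ∀ u ∈ B, θ ≤ ∏ i, f (u i) := by
    intro u hu
    set w := (univ.filter fun i => u i ≠ 0).card with hw
    have hwm : w ≤ m := le_trans (Finset.card_filter_le _ _) (by simp [hm])
    have e1 : ∏ i, f (u i) = (p/s) ^ w * (1-p) ^ (m - w) := by
      rw [← Finset.prod_filter_mul_prod_filter_not univ (fun i => u i ≠ 0)]
      rw [Finset.prod_eq_pow_card (b := p/s) (fun i hi => by
            simp only [Finset.mem_filter] at hi; exact if_neg hi.2),
          Finset.prod_eq_pow_card (b := 1-p) (fun i hi => by
            simp only [Finset.mem_filter, not_not] at hi; exact if_pos hi.2)]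
      congr 2
      rw [Finset.filter_not, Finset.card_sdiff_of_subset (Finset.filter_subset _ _)]
      simp [hw, hm]
    have e2 : (p/s) = r * (1-p) := by
      rw [hrdef]; field_simp
    have e3 : ∏ i, f (u i) = (1-p) ^ m * r ^ w := by
      rw [e1, e2, mul_pow, mul_assoc, ← pow_add, Nat.add_sub_cancel' hwm]; ring
    rw [e3, hθdef, ← Real.rpow_natCast (1-p) m, ← Real.rpow_natCast r w]
    exact mul_le_mul_of_nonneg_left
      (Real.rpow_le_rpow_of_exponent_ge hr0 hr1 (hB u hu))
      (Real.rpow_nonneg h1p.le _)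
  have hsummall : ∑ u : ι → F, ∏ i, f (u i) = 1 := by
    rw [← Fintype.piFinset_univ, ← Finset.prod_univ_sum (fun _ => (univ : Finset F)) (fun _ x => f x)]
    simp [hsum1]
  have hle : (B.card : ℝ) * θ ≤ 1 := by
    calc (B.card : ℝ) * θ = ∑ _u ∈ B, θ := by rw [Finset.sum_const, nsmul_eq_mul]
    _ ≤ ∑ u ∈ B, ∏ i, f (u i) := Finset.sum_le_sum hkey
    _ ≤ ∑ u : ι → F, ∏ i, f (u i) :=
        Finset.sum_le_sum_of_subset_of_nonneg (Finset.subset_univ B)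
          (fun u _ _ => Finset.prod_nonneg fun i _ => hf0 _)
    _ = 1 := hsummall
  have hcard_le : (B.card : ℝ) ≤ θ⁻¹ := by
    rw [← one_div]
    exact (le_div_iff₀ hθ0).mpr hle
  refine hcard_le.trans (le_of_eq ?_)
  have hθlog : θ = Real.exp ((m:ℝ) * Real.log (1-p) + (p*(m:ℝ)) * Real.log r) := by
    rw [hθdef, Real.rpow_def_of_pos h1p, Real.rpow_def_of_pos hr0, ← Real.exp_add]
    ring_nf
  have hlr : Real.log r = Real.log p - Real.log s - Real.log (1-p) := by
    rw [hrdef, Real.log_div hp0.ne' (mul_pos hs0 h1p).ne', Real.log_mul hs0.ne' h1p.ne']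
    ring
  have hLq : Real.log q ≠ 0 := (Real.log_pos hq1).ne'
  rw [hθlog, ← Real.exp_neg, Real.rpow_def_of_pos hq0]
  congr 1
  unfold qaryEntropy Real.logb
  rw [hlr]
  field_simp
  ring


open Finset in
lemma main_n (q t : ℕ) (ht : 2 ≤ t) (F : Type) [Field F] [Fintype F]
    (hcard : Fintype.card F = q) (α : F)
    (δ : ℝ) (hδ0 : 0 < δ) (hδ1 : δ < ((q : ℝ) - 1) / q)
    (n : ℕ) (hn : 0 < n) (hirr : Irreducible (X ^ n - C α : Polynomial F))
    (hbig : (q:ℝ) ^ (((t*n : ℕ) : ℝ) * qaryEntropy q δ) < ((q:ℝ)^n - 1) ^ (t-1)) :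
    ∃ a : Fin t → AdjoinRoot (X ^ n - C α : Polynomial F),
      a ⟨0, Nat.lt_of_lt_of_le Nat.zero_lt_two ht⟩ = 1 ∧ (∀ i, i ≠ (⟨0, Nat.lt_of_lt_of_le Nat.zero_lt_two ht⟩ : Fin t) → IsUnit (a i)) ∧
      ∀ c ∈ Submodule.span (AdjoinRoot (X ^ n - C α : Polynomial F)) {a},
        c ≠ 0 → δ * ((t : ℝ) * n) ≤ (qpcWeight (monic_X_pow_sub_C α hn.ne') c : ℝ) := by
  classical
  haveI : Fact (Irreducible (X ^ n - C α : Polynomial F)) := ⟨hirr⟩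
  have hq2 : 2 ≤ q := by rw [← hcard]; exact Fintype.one_lt_card
  set h : Polynomial F := X ^ n - C α with hh
  have hmon : h.Monic := monic_X_pow_sub_C α hn.ne'
  set R := AdjoinRoot h with hRdef
  haveI : Fintype R := Module.fintypeOfFintype (AdjoinRoot.powerBasis hmon.ne_zero).basis
  have hcardR : Fintype.card R = q ^ n := by
    rw [Module.card_fintype (AdjoinRoot.powerBasis hmon.ne_zero).basis, hcard,
      AdjoinRoot.powerBasis_dim, Fintype.card_fin, natDegree_X_pow_sub_C]
  set wt : R → ℕ := fun r => (AdjoinRoot.modByMonicHom hmon r).support.card with hwt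
  set φ : R → (Fin n → F) := fun r j => (AdjoinRoot.modByMonicHom hmon r).coeff j with hφ
  have hdeg : ∀ r : R, (AdjoinRoot.modByMonicHom hmon r).degree < (n : WithBot ℕ) := by
    intro r
    obtain ⟨f, rfl⟩ := AdjoinRoot.mk_surjective r
    rw [AdjoinRoot.modByMonicHom_mk]
    calc (f %ₘ h).degree < h.degree := degree_modByMonic_lt f hmon
    _ = (n : WithBot ℕ) := degree_X_pow_sub_C hn α
  have hcoeff0 : ∀ (r : R) (k : ℕ), n ≤ k → (AdjoinRoot.modByMonicHom hmon r).coeff k = 0 := by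
    intro r k hk
    exact coeff_eq_zero_of_degree_lt ((hdeg r).trans_le (by exact_mod_cast hk))
  have hφinj : Function.Injective φ := by
    intro r r' hrr
    have heq : AdjoinRoot.modByMonicHom hmon r = AdjoinRoot.modByMonicHom hmon r' := by
      ext k
      by_cases hk : k < n
      · exact congrFun hrr ⟨k, hk⟩
      · rw [hcoeff0 r k (le_of_not_gt hk), hcoeff0 r' k (le_of_not_gt hk)]
    have := congrArg (AdjoinRoot.mk h) heq
    rwa [AdjoinRoot.mk_leftInverse hmon r, AdjoinRoot.mk_leftInverse hmon r'] at this
  have hwtφ : ∀ r : R, wt r = (univ.filter fun j : Fin n => φ r j ≠ 0).card := by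
    intro r
    have hsupp : (AdjoinRoot.modByMonicHom hmon r).support
        = (Finset.range n).filter (fun k => (AdjoinRoot.modByMonicHom hmon r).coeff k ≠ 0) := by
      ext k
      simp only [mem_support_iff, Finset.mem_filter, Finset.mem_range]
      constructor
      · intro hne
        exact ⟨by by_contra hk; exact hne (hcoeff0 r k (le_of_not_gt hk)), hne⟩
      · exact fun hx => hx.2
    rw [hwt]
    dsimp only
    rw [hsupp, Finset.card_filter, Finset.card_filter,
      ← Fin.sum_univ_eq_sum_range
        (fun k => if (AdjoinRoot.modByMonicHom hmon r).coeff k ≠ 0 then 1 else 0) n]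
  set i0 : Fin t := ⟨0, by omega⟩ with hi0
  set s : Fin t → Finset R := fun i => if i = i0 then {1} else univ.filter (· ≠ (0:R)) with hs
  set A := Fintype.piFinset s with hA
  have hcardfil : (univ.filter (· ≠ (0:R))).card = Fintype.card R - 1 := by
    rw [Finset.filter_ne', Finset.card_erase_of_mem (mem_univ _), Finset.card_univ]
  have hAcard : A.card = (Fintype.card R - 1)^(t-1) := by
    have hcongr : ∀ i ∈ univ.erase i0, (s i).card = Fintype.card R - 1 := by
      intro i hi
      simp only [hs]
      rw [if_neg (Finset.ne_of_mem_erase hi)]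
      exact hcardfil
    rw [hA, Fintype.card_piFinset, ← Finset.prod_erase_mul univ _ (Finset.mem_univ i0),
      Finset.prod_congr rfl hcongr, Finset.prod_const,
      Finset.card_erase_of_mem (Finset.mem_univ _), Finset.card_univ, Fintype.card_fin]
    simp [hs]
  have hmemA : ∀ a ∈ A, a i0 = 1 ∧ ∀ i, i ≠ i0 → a i ≠ 0 := by
    intro a ha
    rw [hA, Fintype.mem_piFinset] at ha
    constructor
    · have := ha i0
      simp only [hs, if_pos rfl, Finset.mem_singleton] at this
      exact this
    · intro i hi
      have := ha i
      simp only [hs, if_neg hi, Finset.mem_filter] at this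
      exact this.2
  set Bad := A.filter
      (fun a => ∃ r : R, r ≠ 0 ∧ (∑ i, (wt (r * a i) : ℝ)) < δ * ((t:ℝ) * n)) with hBad
  set L := univ.filter
      (fun v : Fin t → R => (∀ i, v i ≠ 0) ∧ (∑ i, (wt (v i) : ℝ)) < δ * ((t:ℝ) * n)) with hL
  have hBadL : Bad ⊆ L.image (fun v => (v i0)⁻¹ • v) := by
    intro a ha
    rw [hBad, Finset.mem_filter] at ha
    obtain ⟨haA, r, hr0, hsum⟩ := ha
    obtain ⟨h1, h2⟩ := hmemA a haA
    refine Finset.mem_image.mpr ⟨r • a, ?_, ?_⟩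
    · rw [hL, Finset.mem_filter]
      refine ⟨Finset.mem_univ _, fun i => ?_, ?_⟩
      · show r • a i ≠ 0
        rw [smul_eq_mul]
        by_cases hii : i = i0
        · rw [hii, h1, mul_one]; exact hr0
        · exact mul_ne_zero hr0 (h2 i hii)
      · simpa [Pi.smul_apply, smul_eq_mul] using hsum
    · have hv0 : (r • a) i0 = r := by rw [Pi.smul_apply, h1, smul_eq_mul, mul_one]
      rw [hv0, smul_smul, inv_mul_cancel₀ hr0, one_smul]
  have hBadcard : Bad.card ≤ L.card :=
    le_trans (Finset.card_le_card hBadL) Finset.card_image_le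
  set g : (Fin t → R) → (Fin t × Fin n → F) := fun v p => φ (v p.1) p.2 with hg
  have hginj : Function.Injective g := by
    intro v v' hvv
    funext i
    apply hφinj
    funext j
    exact congrFun hvv (i, j)
  have hLcard : (L.card : ℝ) ≤ (q:ℝ) ^ (((t*n : ℕ) : ℝ) * qaryEntropy q δ) := by
    have hcardι : Fintype.card (Fin t × Fin n) = t * n := by simp
    have hball := ball_card_le hcard hq2 hδ0 hδ1.le (Fin t × Fin n) (L.image g) ?_
    · rw [Finset.card_image_of_injective L hginj, hcardι] at hball
      exact hball
    · intro u hu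
      obtain ⟨v, hv, rfl⟩ := Finset.mem_image.mp hu
      rw [hL, Finset.mem_filter] at hv
      have hwsum : (univ.filter fun p : Fin t × Fin n => g v p ≠ 0).card
          = ∑ i, wt (v i) := by
        rw [Finset.card_filter, Fintype.sum_prod_type]
        refine Finset.sum_congr rfl fun i _ => ?_
        rw [hwtφ (v i), Finset.card_filter]
      rw [hwsum, hcardι]
      push_cast
      have := hv.2.2
      push_cast at this
      linarith
  have h1le : 1 ≤ q^n := Nat.one_le_pow _ _ (by omega)
  have hAr : ((A.card : ℝ)) = ((q:ℝ)^n - 1)^(t-1) := by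
    rw [hAcard, hcardR, Nat.cast_pow, Nat.cast_sub h1le, Nat.cast_pow, Nat.cast_one]
  have hBadA : Bad.card < A.card := by
    have hreal : (Bad.card : ℝ) < (A.card : ℝ) := by
      calc (Bad.card:ℝ) ≤ L.card := Nat.cast_le.mpr hBadcard
      _ ≤ _ := hLcard
      _ < _ := hbig
      _ = _ := hAr.symm
    exact_mod_cast hreal
  have hex : ∃ a ∈ A, a ∉ Bad := by
    by_contra hcon
    push_neg at hcon
    exact absurd (Finset.card_le_card fun x hx => hcon x hx) (not_le.mpr hBadA)
  obtain ⟨a, haA, haBad⟩ := hex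
  obtain ⟨h1, h2⟩ := hmemA a haA
  refine ⟨a, h1, fun i hi => isUnit_iff_ne_zero.mpr (h2 i hi), ?_⟩
  intro c hc hc0
  obtain ⟨r, rfl⟩ := Submodule.mem_span_singleton.mp hc
  have hr0 : r ≠ 0 := by rintro rfl; simp at hc0
  have hnotbad : ∀ r' : R, r' ≠ 0 → δ * ((t:ℝ) * n) ≤ (∑ i, (wt (r' * a i) : ℝ)) := by
    intro r' hr'
    by_contra hlt
    push_neg at hlt
    exact haBad (Finset.mem_filter.mpr ⟨haA, r', hr', hlt⟩)
  have hqpc : (qpcWeight (monic_X_pow_sub_C α hn.ne') (r • a) : ℝ)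
      = ∑ i, (wt (r * a i) : ℝ) := by
    rw [qpcWeight]
    push_cast
    refine Finset.sum_congr rfl fun i _ => ?_
    rfl
  rw [hqpc]
  exact hnotbad r hr0


/-- fix a prime power `q`, `t ≥ 2`, `α ∈ F_q^*` and
`0 < δ < (q-1)/q` with `H_q(δ) < (t-1)/t`.  If `x^n − α` is irreducible over
`F_q` for infinitely many `n`, then for infinitely many such `n` there is a
tuple of units `(a_1, …, a_{t-1})` of `R = F_q[x]/⟨x^n − α⟩` such that the
one-generator quasi-twisted `t`-CIS code generated by `(1, a_1, …, a_{t-1})`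
(length `tn`, dimension `n`, rate `1/t`) has minimum Hamming distance at least
`δ·t·n`. -/
theorem stmt_10 (q t : ℕ) (hq : IsPrimePow q) (ht : 2 ≤ t)
    (F : Type) [Field F] [Fintype F] (hcard : Fintype.card F = q)
    (α : F) (hα : α ≠ 0)
    (δ : ℝ) (hδ0 : 0 < δ) (hδ1 : δ < ((q : ℝ) - 1) / q)
    (hent : qaryEntropy q δ < ((t : ℝ) - 1) / t)
    (hinf : {n : ℕ | 0 < n ∧ Irreducible (X ^ n - C α : Polynomial F)}.Infinite) :
    {n : ℕ | ∃ hn : 0 < n, Irreducible (X ^ n - C α : Polynomial F) ∧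
      ∃ a : Fin t → AdjoinRoot (X ^ n - C α : Polynomial F),
        a ⟨0, by omega⟩ = 1 ∧ (∀ i, i ≠ ⟨0, by omega⟩ → IsUnit (a i)) ∧
        ∀ c ∈ Submodule.span (AdjoinRoot (X ^ n - C α : Polynomial F)) {a},
          c ≠ 0 →
            δ * ((t : ℝ) * n) ≤
              (qpcWeight (monic_X_pow_sub_C α hn.ne') c : ℝ)}.Infinite := by
  have hq2 : 2 ≤ q := by rw [← hcard]; exact Fintype.one_lt_card
  have hq1 : (1:ℝ) < q := by exact_mod_cast Nat.lt_of_lt_of_le Nat.one_lt_two hq2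
  have hq0 : (0:ℝ) < q := by linarith
  have h2q : (2:ℝ) ≤ q := by exact_mod_cast hq2
  have ht0 : (0:ℝ) < t := by positivity
  set H := qaryEntropy q δ with hH
  have htH : (t:ℝ) * H < (t:ℝ) - 1 := by
    have h := (lt_div_iff₀ ht0).mp hent
    linarith
  set ε : ℝ := (t:ℝ) - 1 - (t:ℝ) * H with hε
  have hε0 : 0 < ε := by simp only [hε]; linarith
  set N : ℕ := ⌈((t:ℝ)-1)/ε⌉₊ + 1 with hN
  have hsub : {n : ℕ | 0 < n ∧ Irreducible (X ^ n - C α : Polynomial F)} \ {k | k < N}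
      ⊆ {n : ℕ | ∃ hn : 0 < n, Irreducible (X ^ n - C α : Polynomial F) ∧
        ∃ a : Fin t → AdjoinRoot (X ^ n - C α : Polynomial F),
          a ⟨0, by omega⟩ = 1 ∧ (∀ i, i ≠ ⟨0, by omega⟩ → IsUnit (a i)) ∧
          ∀ c ∈ Submodule.span (AdjoinRoot (X ^ n - C α : Polynomial F)) {a},
            c ≠ 0 →
              δ * ((t : ℝ) * n) ≤
                (qpcWeight (monic_X_pow_sub_C α hn.ne') c : ℝ)} := by
    rintro n ⟨⟨hn0, hirr⟩, hnN⟩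
    have hNn : N ≤ n := not_lt.mp hnN
    have hnn : ((t:ℝ)-1)/ε < n := by
      calc ((t:ℝ)-1)/ε ≤ (⌈((t:ℝ)-1)/ε⌉₊ : ℝ) := Nat.le_ceil _
      _ < N := by rw [hN]; push_cast; linarith
      _ ≤ n := by exact_mod_cast hNn
    have hne : (t:ℝ) - 1 < n * ε := by
      rw [div_lt_iff₀ hε0] at hnn; linarith
    have hexpand : (n:ℝ) * ε = (n:ℝ)*((t:ℝ)-1) - ((t:ℝ)*(n:ℝ))*H := by
      rw [hε]; ring
    have hcast1 : (((t-1:ℕ)):ℝ) = (t:ℝ)-1 := by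
      rw [Nat.cast_sub (by omega), Nat.cast_one]
    have hcast2 : (((n*(t-1):ℕ)):ℝ) = (n:ℝ)*((t:ℝ)-1) := by
      rw [Nat.cast_mul, hcast1]
    have hexp : ((t*n:ℕ):ℝ) * H + (((t-1:ℕ)):ℝ) < (((n*(t-1):ℕ)):ℝ) := by
      rw [hcast1, hcast2, Nat.cast_mul]
      push_cast
      nlinarith [hne, hexpand]
    have hqn2 : (2:ℝ) ≤ (q:ℝ)^n :=
      le_trans h2q (le_self_pow₀ (by linarith) hn0.ne')
    have hbig : (q:ℝ) ^ (((t*n : ℕ) : ℝ) * H) < ((q:ℝ)^n - 1) ^ (t-1) := by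
      have hmid : (q:ℝ) ^ ((((t*n:ℕ)):ℝ) * H) < ((q:ℝ)^n/2)^(t-1) := by
        rw [div_pow, lt_div_iff₀ (by positivity)]
        calc (q:ℝ)^((((t*n:ℕ)):ℝ) * H) * 2^(t-1)
            ≤ (q:ℝ)^((((t*n:ℕ)):ℝ)*H) * (q:ℝ)^(t-1) := by
              apply mul_le_mul_of_nonneg_left
                (pow_le_pow_left₀ (by norm_num) h2q _)
                (Real.rpow_nonneg hq0.le _)
        _ = (q:ℝ)^((((t*n:ℕ)):ℝ)*H + (((t-1:ℕ)):ℝ)) := by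
              rw [Real.rpow_add hq0, Real.rpow_natCast]
        _ < (q:ℝ)^((((n*(t-1):ℕ)):ℝ)) := Real.rpow_lt_rpow_of_exponent_lt hq1 hexp
        _ = ((q:ℝ)^n)^(t-1) := by rw [Real.rpow_natCast, pow_mul]
      refine lt_of_lt_of_le hmid (pow_le_pow_left₀ (by positivity) (by linarith) _)
    obtain ⟨a, ha⟩ := main_n q t ht F hcard α δ hδ0 hδ1 n hn0 hirr hbig
    exact ⟨hn0, hirr, a, ha⟩
  exact (hinf.diff (Set.finite_lt_nat N)).mono hsub
end

section
/- There exist units a_1(x), a_2(x) of R = F_2[x]/⟨x^5 − 1⟩ such that the binary one-generator quasi-cyclic 3-CIS code C_a = {(u, a_1·u, a_2·u) : u ∈ R}, an F_2-linear code of length 15 and dimension 5, has minimum Hamming distance 7 (which equals the best possible minimum distance of any binary linear [15, 5] code). -/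
open Polynomial
open Finset

lemma monic_X_pow_sub_one' {F : Type*} [Field F] {n : ℕ} (hn : n ≠ 0) :
    ((X : Polynomial F) ^ n - 1).Monic := by
  simpa using monic_X_pow_sub_C (1 : F) hn

-- Plotkin-type bound part
lemma plotkin15 : ∀ D : Submodule (ZMod 2) (Fin 15 → ZMod 2),
    Module.finrank (ZMod 2) D = 5 →
      ∃ v ∈ D, v ≠ 0 ∧ hammingNorm v ≤ 7 := by
  classical
  intro D hD
  by_contra hcon
  push_neg at hcon
  have hbig : ∀ v ∈ D, v ≠ 0 → 8 ≤ hammingNorm v := by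
    intro v hv hv0
    have := hcon v hv hv0
    omega
  set S : Finset (Fin 15 → ZMod 2) := univ.filter (· ∈ D) with hS
  have hcardS : S.card = 32 := by
    have : Fintype.card D = 32 := by
      rw [Module.card_eq_pow_finrank (K := ZMod 2) (V := D), ZMod.card, hD]; norm_num
    rw [← this, Fintype.card_subtype]
  have h0S : (0 : Fin 15 → ZMod 2) ∈ S := by
    simp [hS, Submodule.zero_mem]
  -- upper bound per coordinate
  have hcoord : ∀ i : Fin 15, (S.filter (fun v => v i ≠ 0)).card ≤ 16 := by
    intro i
    set T := S.filter (fun v => v i ≠ 0) with hT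
    rcases T.eq_empty_or_nonempty with he | ⟨w, hw⟩
    · simp [he]
    · have hwS : w ∈ S ∧ w i ≠ 0 := by simpa [hT] using hw
      have hwD : w ∈ D := by have := hwS.1; simpa [hS] using this
      have hle : T.card ≤ (S \ T).card := by
        apply Finset.card_le_card_of_injOn (fun v => v + w)
        · intro v hv
          have hvS : v ∈ S ∧ v i ≠ 0 := by simpa [hT] using hv
          have hvD : v ∈ D := by have := hvS.1; simpa [hS] using this
          have hsum : v + w ∈ D := D.add_mem hvD hwD
          have h1 : ∀ x : ZMod 2, x ≠ 0 → x = 1 := by decide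
          have : (v + w) i = 0 := by
            have := h1 _ hvS.2
            have := h1 _ hwS.2
            simp only [Pi.add_apply]
            rw [h1 _ hvS.2, h1 _ hwS.2]; decide
          simp only [Finset.mem_coe, Finset.mem_sdiff, hT, Finset.mem_filter, hS, Finset.mem_univ,
            true_and, not_and, not_not]
          exact ⟨hsum, fun _ => this⟩
        · intro a _ b _ hab
          have : ∀ j, a j + w j = b j + w j := fun j => congrFun hab j
          funext j
          have := this j
          exact add_right_cancel this
      have hsub : T ⊆ S := Finset.filter_subset _ _
      have := Finset.card_sdiff_of_subset hsub
      omega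
  -- total weight sum
  have hsum_eq : ∑ v ∈ S, hammingNorm v = ∑ i : Fin 15, (S.filter (fun v => v i ≠ 0)).card := by
    unfold hammingNorm
    simp only [Finset.card_filter]
    exact Finset.sum_comm
  have hupper : ∑ v ∈ S, hammingNorm v ≤ 240 := by
    rw [hsum_eq]
    calc ∑ i : Fin 15, (S.filter (fun v => v i ≠ 0)).card
        ≤ ∑ _i : Fin 15, 16 := Finset.sum_le_sum (fun i _ => hcoord i)
      _ = 240 := by simp
  have hlower : 248 ≤ ∑ v ∈ S, hammingNorm v := by
    have herase : (S.erase 0).card = 31 := by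
      rw [Finset.card_erase_of_mem h0S, hcardS]
    have h8 : ∀ v ∈ S.erase 0, 8 ≤ hammingNorm v := by
      intro v hv
      have hvne : v ≠ 0 := Finset.ne_of_mem_erase hv
      have hvS : v ∈ S := Finset.mem_of_mem_erase hv
      have hvD : v ∈ D := by simpa [hS] using hvS
      exact hbig v hvD hvne
    have : (S.erase 0).card • 8 ≤ ∑ v ∈ S.erase 0, hammingNorm v :=
      Finset.card_nsmul_le_sum _ _ _ h8
    rw [herase, smul_eq_mul] at this
    have hsub : ∑ v ∈ S.erase 0, hammingNorm v ≤ ∑ v ∈ S, hammingNorm v :=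
      Finset.sum_le_sum_of_subset (Finset.erase_subset _ _)
    linarith
  linarith

noncomputable section
abbrev hpoly : Polynomial (ZMod 2) := (X : Polynomial (ZMod 2)) ^ 5 - 1

lemma hpoly_monic : hpoly.Monic := by
  simpa using monic_X_pow_sub_C (1 : ZMod 2) (by norm_num)

lemma hpoly_degree : hpoly.degree = 5 := by
  have : hpoly = (X : Polynomial (ZMod 2)) ^ 5 - C 1 := by simp
  rw [this]
  exact degree_X_pow_sub_C (by norm_num) 1

abbrev Rq := AdjoinRoot hpoly

lemma alpha_pow : (AdjoinRoot.root hpoly) ^ 5 = 1 := by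
  have h0 : AdjoinRoot.mk hpoly hpoly = 0 := AdjoinRoot.mk_self
  have : (AdjoinRoot.root hpoly) ^ 5 - 1 = 0 := by
    simpa [map_sub, map_pow, AdjoinRoot.mk_X] using h0
  exact sub_eq_zero.mp this

lemma two_eq_zero : (2 : Rq) = 0 := by
  have h1 : (2 : Rq) = algebraMap (ZMod 2) Rq 2 := (map_ofNat _ 2).symm
  rw [h1]
  have : (2 : ZMod 2) = 0 := by decide
  rw [this, map_zero]

lemma mod_alpha_pow {k : ℕ} (hk : k < 5) (hmon : hpoly.Monic) :
    AdjoinRoot.modByMonicHom hmon ((AdjoinRoot.root hpoly) ^ k) = X ^ k := by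
  have h1 : (AdjoinRoot.root hpoly) ^ k = AdjoinRoot.mk hpoly (X ^ k) := by
    rw [map_pow, AdjoinRoot.mk_X]
  rw [h1, AdjoinRoot.modByMonicHom_mk]
  rw [modByMonic_eq_self_iff hmon, hpoly_degree, degree_X_pow]
  exact_mod_cast hk

/-- every element of Rq is an F2-combination of powers of the root -/
lemma rep_exists (u : Rq) :
    ∃ m : Fin 5 → ZMod 2, u = ∑ j : Fin 5, m j • (AdjoinRoot.root hpoly) ^ (j : ℕ) := by
  obtain ⟨p, rfl⟩ := AdjoinRoot.mk_surjective u
  set q := p %ₘ hpoly with hq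
  have hmk : AdjoinRoot.mk hpoly p = AdjoinRoot.mk hpoly q := by
    rw [AdjoinRoot.mk_eq_mk]
    refine ⟨p /ₘ hpoly, ?_⟩
    have := modByMonic_add_div p hpoly
    linear_combination -this
  have hdeg : q.natDegree < 5 := by
    have h2 : q.degree < hpoly.degree := degree_modByMonic_lt p hpoly_monic
    rw [hpoly_degree] at h2
    rcases eq_or_ne q 0 with h0 | h0
    · rw [h0]; simp
    · exact (natDegree_lt_iff_degree_lt h0).mpr (by exact_mod_cast h2)
  refine ⟨fun j => q.coeff j, ?_⟩
  rw [hmk]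
  conv_lhs => rw [q.as_sum_range' 5 hdeg]
  rw [map_sum, Fin.sum_univ_eq_sum_range (fun j => q.coeff j • (AdjoinRoot.root hpoly) ^ j)]
  refine Finset.sum_congr rfl fun i _ => ?_
  rw [← C_mul_X_pow_eq_monomial, map_mul, map_pow, AdjoinRoot.mk_X, AdjoinRoot.mk_C,
    Algebra.smul_def]
  rfl


lemma supp_card (v : Fin 5 → ZMod 2) :
    (∑ k : Fin 5, v k • (X : Polynomial (ZMod 2)) ^ (k : ℕ)).support.card = hammingNorm v := by
  have hcoeff : ∀ n : ℕ, (∑ k : Fin 5, v k • (X : Polynomial (ZMod 2)) ^ (k : ℕ)).coeff n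
      = if hn : n < 5 then v ⟨n, hn⟩ else 0 := by
    intro n
    rw [finset_sum_coeff]
    simp only [coeff_smul, coeff_X_pow, smul_eq_mul]
    split_ifs with hn
    · rw [Finset.sum_eq_single (⟨n, hn⟩ : Fin 5)]
      · simp
      · intro b _ hb
        have hbn : n ≠ (b : ℕ) := by
          intro h; exact hb (Fin.ext h.symm)
        simp [hbn]
      · simp
    · apply Finset.sum_eq_zero
      intro k _
      have : n ≠ (k : ℕ) := by have := k.isLt; omega
      simp [this]
  have hsupp : (∑ k : Fin 5, v k • (X : Polynomial (ZMod 2)) ^ (k : ℕ)).support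
      = Finset.map ⟨Fin.val, Fin.val_injective⟩ (univ.filter fun k => v k ≠ 0) := by
    ext n
    simp only [mem_support_iff, hcoeff, Finset.mem_map, Finset.mem_filter, Finset.mem_univ,
      true_and, Function.Embedding.coeFn_mk]
    constructor
    · intro hne
      by_cases hn : n < 5
      · exact ⟨⟨n, hn⟩, by simpa [hn] using hne, rfl⟩
      · simp [hn] at hne
    · rintro ⟨k, hk, rfl⟩
      simpa [k.isLt] using hk
  rw [hsupp, Finset.card_map]
  rfl

def w1v (m : Fin 5 → ZMod 2) : Fin 5 → ZMod 2 :=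
  ![m 0 + m 4 + m 3, m 1 + m 0 + m 4, m 2 + m 1 + m 0, m 3 + m 2 + m 1, m 4 + m 3 + m 2]

def w2v (m : Fin 5 → ZMod 2) : Fin 5 → ZMod 2 :=
  ![m 0 + m 4 + m 2, m 1 + m 0 + m 3, m 2 + m 1 + m 4, m 3 + m 2 + m 0, m 4 + m 3 + m 1]

lemma key_bound : ∀ m : Fin 5 → ZMod 2, m ≠ 0 →
    7 ≤ hammingNorm m + hammingNorm (w1v m) + hammingNorm (w2v m) := by decide

local notation "α" => AdjoinRoot.root hpoly

lemma prod1 (m : Fin 5 → ZMod 2) :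
    (1 + α + α ^ 2) * (∑ j : Fin 5, m j • α ^ (j : ℕ)) = ∑ k : Fin 5, w1v m k • α ^ (k : ℕ) := by
  have hα := alpha_pow
  simp only [Fin.sum_univ_five, w1v, Matrix.cons_val_zero, Matrix.cons_val_one, Matrix.head_cons,
    Matrix.cons_val_two, Matrix.tail_cons, Matrix.cons_val_three, Matrix.cons_val_four]
  simp only [Algebra.smul_def, map_add, AdjoinRoot.algebraMap_eq,
    show ((0 : Fin 5) : ℕ) = 0 from rfl, show ((1 : Fin 5) : ℕ) = 1 from rfl,
    show ((2 : Fin 5) : ℕ) = 2 from rfl, show ((3 : Fin 5) : ℕ) = 3 from rfl,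
    show ((4 : Fin 5) : ℕ) = 4 from rfl]
  linear_combination (AdjoinRoot.of hpoly (m 3) + AdjoinRoot.of hpoly (m 4)
    + AdjoinRoot.of hpoly (m 4) * α) * hα

lemma prod2 (m : Fin 5 → ZMod 2) :
    (1 + α + α ^ 3) * (∑ j : Fin 5, m j • α ^ (j : ℕ)) = ∑ k : Fin 5, w2v m k • α ^ (k : ℕ) := by
  have hα := alpha_pow
  simp only [Fin.sum_univ_five, w2v, Matrix.cons_val_zero, Matrix.cons_val_one, Matrix.head_cons,
    Matrix.cons_val_two, Matrix.tail_cons, Matrix.cons_val_three, Matrix.cons_val_four]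
  simp only [Algebra.smul_def, map_add, AdjoinRoot.algebraMap_eq,
    show ((0 : Fin 5) : ℕ) = 0 from rfl, show ((1 : Fin 5) : ℕ) = 1 from rfl,
    show ((2 : Fin 5) : ℕ) = 2 from rfl, show ((3 : Fin 5) : ℕ) = 3 from rfl,
    show ((4 : Fin 5) : ℕ) = 4 from rfl]
  linear_combination (AdjoinRoot.of hpoly (m 2) + AdjoinRoot.of hpoly (m 4)
    + AdjoinRoot.of hpoly (m 3) * α + AdjoinRoot.of hpoly (m 4) * α ^ 2) * hα

lemma mod_sum (hmon : hpoly.Monic) (v : Fin 5 → ZMod 2) :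
    AdjoinRoot.modByMonicHom hmon (∑ k : Fin 5, v k • α ^ (k : ℕ))
      = ∑ k : Fin 5, v k • (X : Polynomial (ZMod 2)) ^ (k : ℕ) := by
  rw [map_sum]
  refine Finset.sum_congr rfl fun k _ => ?_
  rw [map_smul, mod_alpha_pow k.isLt]

lemma weight_formula (hmon : hpoly.Monic) (m : Fin 5 → ZMod 2) :
    qpcWeight hmon ![∑ j : Fin 5, m j • α ^ (j : ℕ),
        (1 + α + α ^ 2) * ∑ j : Fin 5, m j • α ^ (j : ℕ),
        (1 + α + α ^ 3) * ∑ j : Fin 5, m j • α ^ (j : ℕ)]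
      = hammingNorm m + hammingNorm (w1v m) + hammingNorm (w2v m) := by
  unfold qpcWeight
  rw [Fin.sum_univ_three]
  simp only [Matrix.cons_val_zero, Matrix.cons_val_one, Matrix.head_cons, Matrix.cons_val_two,
    Matrix.tail_cons]
  rw [prod1, prod2, mod_sum, mod_sum, mod_sum, supp_card, supp_card, supp_card]

lemma unit1 : IsUnit (1 + α + α ^ 2) := by
  apply IsUnit.of_mul_eq_one (α + α ^ 2 + α ^ 4)
  linear_combination (1 + α) * alpha_pow + (α + α ^ 2 + α ^ 3 + α ^ 4) * two_eq_zero

lemma unit2 : IsUnit (1 + α + α ^ 3) := by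
  apply IsUnit.of_mul_eq_one (α + α ^ 2 + α ^ 3)
  linear_combination (1 + α) * alpha_pow + (α + α ^ 2 + α ^ 3 + α ^ 4) * two_eq_zero

end
/-- there are units `a₁, a₂` of `R = F_2[x]/⟨x^5 − 1⟩` such that
the binary one-generator quasi-cyclic 3-CIS code
`C_a = {(u, a₁·u, a₂·u) : u ∈ R}`, an `F_2`-linear code of length 15 and
dimension 5, has minimum Hamming distance 7, which is the best possible
minimum distance of a binary linear `[15, 5]` code. -/
theorem stmt_17 :
    ∃ a₁ a₂ : AdjoinRoot ((X : Polynomial (ZMod 2)) ^ 5 - 1),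
      IsUnit a₁ ∧ IsUnit a₂ ∧
      (∀ c ∈ {c : Fin 3 → AdjoinRoot ((X : Polynomial (ZMod 2)) ^ 5 - 1) |
          ∃ u, c = ![u, a₁ * u, a₂ * u]}, c ≠ 0 →
        7 ≤ qpcWeight (monic_X_pow_sub_one' (by norm_num)) c) ∧
      (∃ c ∈ {c : Fin 3 → AdjoinRoot ((X : Polynomial (ZMod 2)) ^ 5 - 1) |
          ∃ u, c = ![u, a₁ * u, a₂ * u]}, c ≠ 0 ∧
        qpcWeight (monic_X_pow_sub_one' (by norm_num)) c = 7) ∧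
      -- best possible: every binary linear [15, 5] code has a nonzero word of
      -- weight at most 7
      ∀ D : Submodule (ZMod 2) (Fin 15 → ZMod 2),
        Module.finrank (ZMod 2) D = 5 →
          ∃ v ∈ D, v ≠ 0 ∧ hammingNorm v ≤ 7 := by
  have hnt : Nontrivial Rq := AdjoinRoot.nontrivial hpoly (by rw [hpoly_degree]; norm_num)
  refine ⟨1 + AdjoinRoot.root hpoly + (AdjoinRoot.root hpoly) ^ 2,
    1 + AdjoinRoot.root hpoly + (AdjoinRoot.root hpoly) ^ 3, unit1, unit2, ?_, ?_, plotkin15⟩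
  · rintro c ⟨u, rfl⟩ hne
    obtain ⟨m, hm⟩ := rep_exists u
    have hm0 : m ≠ 0 := by
      rintro rfl
      apply hne
      have hu : u = 0 := by rw [hm]; simp
      subst hu
      funext i
      fin_cases i <;> simp
    rw [hm, weight_formula]
    exact key_bound m hm0
  · refine ⟨![1, 1 + AdjoinRoot.root hpoly + (AdjoinRoot.root hpoly) ^ 2,
      1 + AdjoinRoot.root hpoly + (AdjoinRoot.root hpoly) ^ 3],
      ⟨1, by rw [mul_one, mul_one]⟩, ?_, ?_⟩
    · intro h
      have h0 : (1 : Rq) = 0 := by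
        have := congrFun h 0
        simpa using this

      exact one_ne_zero h0
    · have h1 : (1 : Rq) = ∑ j : Fin 5, (![1,0,0,0,0] : Fin 5 → ZMod 2) j
          • (AdjoinRoot.root hpoly) ^ (j : ℕ) := by
        simp [Fin.sum_univ_five]
      rw [show (![1, 1 + AdjoinRoot.root hpoly + (AdjoinRoot.root hpoly) ^ 2,
          1 + AdjoinRoot.root hpoly + (AdjoinRoot.root hpoly) ^ 3] : Fin 3 → Rq)
          = ![∑ j : Fin 5, (![1,0,0,0,0] : Fin 5 → ZMod 2) j • (AdjoinRoot.root hpoly) ^ (j : ℕ),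
            (1 + AdjoinRoot.root hpoly + (AdjoinRoot.root hpoly) ^ 2)
              * ∑ j : Fin 5, (![1,0,0,0,0] : Fin 5 → ZMod 2) j • (AdjoinRoot.root hpoly) ^ (j : ℕ),
            (1 + AdjoinRoot.root hpoly + (AdjoinRoot.root hpoly) ^ 3)
              * ∑ j : Fin 5, (![1,0,0,0,0] : Fin 5 → ZMod 2) j • (AdjoinRoot.root hpoly) ^ (j : ℕ)]
          from by rw [← h1, mul_one, mul_one]]
      rw [weight_formula]
      decide
end

section
/- There exist a separable monic polynomial h(x) ∈ F_2[x] of degree 6 and a unit a(x) of R = F_2[x]/⟨h(x)⟩ such that the binary one-generator quasi-polycyclic 2-CIS code C_a = {(u, a·u) : u ∈ R}, an F_2-linear code of length 12 and dimension 6, has minimum Hamming distance 4. -/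
open Polynomial

private lemma zmod2_ne_zero : ∀ x : ZMod 2, x ≠ 0 → x = 1 := by decide

private lemma wt3 {p : Polynomial (ZMod 2)} {i j k : ℕ} (hij : i < j) (hjk : j < k)
    (hi : p.coeff i ≠ 0) (hj : p.coeff j ≠ 0) (hk : p.coeff k ≠ 0) :
    3 ≤ p.support.card := by
  have hsub : ({i, j, k} : Finset ℕ) ⊆ p.support := by
    intro n hn
    simp only [Finset.mem_insert, Finset.mem_singleton] at hn
    rcases hn with rfl | rfl | rfl <;> simpa [Polynomial.mem_support_iff]
  have hcard : ({i, j, k} : Finset ℕ).card = 3 := by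
    rw [Finset.card_insert_of_notMem (by simp; omega),
      Finset.card_insert_of_notMem (by simp; omega), Finset.card_singleton]
  calc 3 = ({i, j, k} : Finset ℕ).card := hcard.symm
    _ ≤ _ := Finset.card_le_card hsub

private lemma degH {r : Polynomial (ZMod 2)} (hr : r.degree ≤ 5) :
    r.degree < (X^6+X+1 : (ZMod 2)[X]).degree := by
  have h6 : (X^6+X+1 : (ZMod 2)[X]).degree = 6 := by compute_degree!
  rw [h6]
  exact lt_of_le_of_lt hr (by decide)

private lemma modeq {h p s r : Polynomial (ZMod 2)} (hmon : h.Monic)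
    (hid : p = h * s + r) (hr : r.degree < h.degree) : p %ₘ h = r := by
  subst hid
  rw [Polynomial.add_modByMonic, Polynomial.self_mul_modByMonic hmon, zero_add,
    (Polynomial.modByMonic_eq_self_iff hmon).mpr hr]

private lemma wA0 :
    3 ≤ (((X^2+X+1) * X^0 : (ZMod 2)[X]) %ₘ (X^6+X+1)).support.card := by
  have hmon : (X^6+X+1 : (ZMod 2)[X]).Monic := by monicity!
  rw [modeq hmon (show ((X^2+X+1) * X^0 : (ZMod 2)[X])
      = (X^6+X+1) * (0) + (X^2 + X + 1) by ring_nf; try reduce_mod_char)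
    (degH (by compute_degree!))]
  exact wt3 (by omega) (by omega) (i := 0) (j := 1) (k := 2)
    (by simp [coeff_X_pow, coeff_one, coeff_X]) (by simp [coeff_X_pow, coeff_one, coeff_X])
    (by simp [coeff_X_pow, coeff_one, coeff_X])

private lemma wA1 :
    3 ≤ (((X^2+X+1) * X^1 : (ZMod 2)[X]) %ₘ (X^6+X+1)).support.card := by
  have hmon : (X^6+X+1 : (ZMod 2)[X]).Monic := by monicity!
  rw [modeq hmon (show ((X^2+X+1) * X^1 : (ZMod 2)[X])
      = (X^6+X+1) * (0) + (X^3 + X^2 + X) by ring_nf; try reduce_mod_char)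
    (degH (by compute_degree!))]
  exact wt3 (by omega) (by omega) (i := 1) (j := 2) (k := 3)
    (by simp [coeff_X_pow, coeff_one, coeff_X]) (by simp [coeff_X_pow, coeff_one, coeff_X])
    (by simp [coeff_X_pow, coeff_one, coeff_X])

private lemma wA2 :
    3 ≤ (((X^2+X+1) * X^2 : (ZMod 2)[X]) %ₘ (X^6+X+1)).support.card := by
  have hmon : (X^6+X+1 : (ZMod 2)[X]).Monic := by monicity!
  rw [modeq hmon (show ((X^2+X+1) * X^2 : (ZMod 2)[X])
      = (X^6+X+1) * (0) + (X^4 + X^3 + X^2) by ring_nf; try reduce_mod_char)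
    (degH (by compute_degree!))]
  exact wt3 (by omega) (by omega) (i := 2) (j := 3) (k := 4)
    (by simp [coeff_X_pow, coeff_one, coeff_X]) (by simp [coeff_X_pow, coeff_one, coeff_X])
    (by simp [coeff_X_pow, coeff_one, coeff_X])

private lemma wA3 :
    3 ≤ (((X^2+X+1) * X^3 : (ZMod 2)[X]) %ₘ (X^6+X+1)).support.card := by
  have hmon : (X^6+X+1 : (ZMod 2)[X]).Monic := by monicity!
  rw [modeq hmon (show ((X^2+X+1) * X^3 : (ZMod 2)[X])
      = (X^6+X+1) * (0) + (X^5 + X^4 + X^3) by ring_nf; try reduce_mod_char)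
    (degH (by compute_degree!))]
  exact wt3 (by omega) (by omega) (i := 3) (j := 4) (k := 5)
    (by simp [coeff_X_pow, coeff_one, coeff_X]) (by simp [coeff_X_pow, coeff_one, coeff_X])
    (by simp [coeff_X_pow, coeff_one, coeff_X])

private lemma wA4 :
    3 ≤ (((X^2+X+1) * X^4 : (ZMod 2)[X]) %ₘ (X^6+X+1)).support.card := by
  have hmon : (X^6+X+1 : (ZMod 2)[X]).Monic := by monicity!
  rw [modeq hmon (show ((X^2+X+1) * X^4 : (ZMod 2)[X])
      = (X^6+X+1) * (1) + (X^5 + X^4 + X + 1) by ring_nf; try reduce_mod_char)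
    (degH (by compute_degree!))]
  exact wt3 (by omega) (by omega) (i := 0) (j := 1) (k := 4)
    (by simp [coeff_X_pow, coeff_one, coeff_X]) (by simp [coeff_X_pow, coeff_one, coeff_X])
    (by simp [coeff_X_pow, coeff_one, coeff_X])

private lemma wA5 :
    3 ≤ (((X^2+X+1) * X^5 : (ZMod 2)[X]) %ₘ (X^6+X+1)).support.card := by
  have hmon : (X^6+X+1 : (ZMod 2)[X]).Monic := by monicity!
  rw [modeq hmon (show ((X^2+X+1) * X^5 : (ZMod 2)[X])
      = (X^6+X+1) * (X + 1) + (X^5 + X^2 + 1) by ring_nf; try reduce_mod_char)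
    (degH (by compute_degree!))]
  exact wt3 (by omega) (by omega) (i := 0) (j := 2) (k := 5)
    (by simp [coeff_X_pow, coeff_one, coeff_X]) (by simp [coeff_X_pow, coeff_one, coeff_X])
    (by simp [coeff_X_pow, coeff_one, coeff_X])

private lemma wB0 :
    3 ≤ (((X^5+X^3+X^2) * X^0 : (ZMod 2)[X]) %ₘ (X^6+X+1)).support.card := by
  have hmon : (X^6+X+1 : (ZMod 2)[X]).Monic := by monicity!
  rw [modeq hmon (show ((X^5+X^3+X^2) * X^0 : (ZMod 2)[X])
      = (X^6+X+1) * (0) + (X^5 + X^3 + X^2) by ring_nf; try reduce_mod_char)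
    (degH (by compute_degree!))]
  exact wt3 (by omega) (by omega) (i := 2) (j := 3) (k := 5)
    (by simp [coeff_X_pow, coeff_one, coeff_X]) (by simp [coeff_X_pow, coeff_one, coeff_X])
    (by simp [coeff_X_pow, coeff_one, coeff_X])

private lemma wB1 :
    3 ≤ (((X^5+X^3+X^2) * X^1 : (ZMod 2)[X]) %ₘ (X^6+X+1)).support.card := by
  have hmon : (X^6+X+1 : (ZMod 2)[X]).Monic := by monicity!
  rw [modeq hmon (show ((X^5+X^3+X^2) * X^1 : (ZMod 2)[X])
      = (X^6+X+1) * (1) + (X^4 + X^3 + X + 1) by ring_nf; try reduce_mod_char)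
    (degH (by compute_degree!))]
  exact wt3 (by omega) (by omega) (i := 0) (j := 1) (k := 3)
    (by simp [coeff_X_pow, coeff_one, coeff_X]) (by simp [coeff_X_pow, coeff_one, coeff_X])
    (by simp [coeff_X_pow, coeff_one, coeff_X])

private lemma wB2 :
    3 ≤ (((X^5+X^3+X^2) * X^2 : (ZMod 2)[X]) %ₘ (X^6+X+1)).support.card := by
  have hmon : (X^6+X+1 : (ZMod 2)[X]).Monic := by monicity!
  rw [modeq hmon (show ((X^5+X^3+X^2) * X^2 : (ZMod 2)[X])
      = (X^6+X+1) * (X) + (X^5 + X^4 + X^2 + X) by ring_nf; try reduce_mod_char)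
    (degH (by compute_degree!))]
  exact wt3 (by omega) (by omega) (i := 1) (j := 2) (k := 4)
    (by simp [coeff_X_pow, coeff_one, coeff_X]) (by simp [coeff_X_pow, coeff_one, coeff_X])
    (by simp [coeff_X_pow, coeff_one, coeff_X])

private lemma wB3 :
    3 ≤ (((X^5+X^3+X^2) * X^3 : (ZMod 2)[X]) %ₘ (X^6+X+1)).support.card := by
  have hmon : (X^6+X+1 : (ZMod 2)[X]).Monic := by monicity!
  rw [modeq hmon (show ((X^5+X^3+X^2) * X^3 : (ZMod 2)[X])
      = (X^6+X+1) * (X^2 + 1) + (X^5 + X^3 + X^2 + X + 1) by ring_nf; try reduce_mod_char)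
    (degH (by compute_degree!))]
  exact wt3 (by omega) (by omega) (i := 0) (j := 1) (k := 2)
    (by simp [coeff_X_pow, coeff_one, coeff_X]) (by simp [coeff_X_pow, coeff_one, coeff_X])
    (by simp [coeff_X_pow, coeff_one, coeff_X])

private lemma wB4 :
    3 ≤ (((X^5+X^3+X^2) * X^4 : (ZMod 2)[X]) %ₘ (X^6+X+1)).support.card := by
  have hmon : (X^6+X+1 : (ZMod 2)[X]).Monic := by monicity!
  rw [modeq hmon (show ((X^5+X^3+X^2) * X^4 : (ZMod 2)[X])
      = (X^6+X+1) * (X^3 + X + 1) + (X^4 + X^3 + X^2 + 1) by ring_nf; try reduce_mod_char)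
    (degH (by compute_degree!))]
  exact wt3 (by omega) (by omega) (i := 0) (j := 2) (k := 3)
    (by simp [coeff_X_pow, coeff_one, coeff_X]) (by simp [coeff_X_pow, coeff_one, coeff_X])
    (by simp [coeff_X_pow, coeff_one, coeff_X])

private lemma wB5 :
    3 ≤ (((X^5+X^3+X^2) * X^5 : (ZMod 2)[X]) %ₘ (X^6+X+1)).support.card := by
  have hmon : (X^6+X+1 : (ZMod 2)[X]).Monic := by monicity!
  rw [modeq hmon (show ((X^5+X^3+X^2) * X^5 : (ZMod 2)[X])
      = (X^6+X+1) * (X^4 + X^2 + X) + (X^5 + X^4 + X^3 + X) by ring_nf; try reduce_mod_char)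
    (degH (by compute_degree!))]
  exact wt3 (by omega) (by omega) (i := 1) (j := 3) (k := 4)
    (by simp [coeff_X_pow, coeff_one, coeff_X]) (by simp [coeff_X_pow, coeff_one, coeff_X])
    (by simp [coeff_X_pow, coeff_one, coeff_X])

set_option maxHeartbeats 1000000 in
/-- there are a separable monic polynomial `h ∈ F_2[x]` of
degree 6 and a unit `a` of `R = F_2[x]/⟨h⟩` such that the binary one-generator
quasi-polycyclic 2-CIS code `C_a = {(u, a·u) : u ∈ R}`, an `F_2`-linear code
of length 12 and dimension 6, has minimum Hamming distance 4. -/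
theorem stmt_19 :
    ∃ (h : Polynomial (ZMod 2)) (hmon : h.Monic), h.Separable ∧
      h.natDegree = 6 ∧
      ∃ a : AdjoinRoot h, IsUnit a ∧
        (∀ c ∈ {c : Fin 2 → AdjoinRoot h | ∃ u, c = ![u, a * u]}, c ≠ 0 →
          4 ≤ qpcWeight hmon c) ∧
        (∃ c ∈ {c : Fin 2 → AdjoinRoot h | ∃ u, c = ![u, a * u]}, c ≠ 0 ∧
          qpcWeight hmon c = 4) := by
  have hmon : (X^6+X+1 : (ZMod 2)[X]).Monic := by monicity!
  have hdeg : (X^6+X+1 : (ZMod 2)[X]).degree = 6 := by compute_degree!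
  -- the inverse relation
  have hinv : AdjoinRoot.mk (X^6+X+1 : (ZMod 2)[X]) (X^2+X+1) *
      AdjoinRoot.mk (X^6+X+1 : (ZMod 2)[X]) (X^5+X^3+X^2) = 1 := by
    rw [← map_mul,
      show ((X^2+X+1) * (X^5+X^3+X^2) : (ZMod 2)[X]) = (X^6+X+1) * (X+1) + 1 by
        ring_nf; try reduce_mod_char,
      map_add, map_mul, AdjoinRoot.mk_self, zero_mul, map_one, zero_add]
  -- representative facts
  have key : ∀ w : AdjoinRoot (X^6+X+1 : (ZMod 2)[X]),
      (AdjoinRoot.modByMonicHom hmon w).degree < (X^6+X+1 : (ZMod 2)[X]).degree := by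
    intro w
    obtain ⟨f, rfl⟩ := AdjoinRoot.mk_surjective w
    rw [AdjoinRoot.modByMonicHom_mk]
    exact Polynomial.degree_modByMonic_lt f hmon
  have hone : AdjoinRoot.modByMonicHom hmon (1 : AdjoinRoot (X^6+X+1 : (ZMod 2)[X])) = 1 := by
    rw [← map_one (AdjoinRoot.mk (X^6+X+1 : (ZMod 2)[X])), AdjoinRoot.modByMonicHom_mk,
      (Polynomial.modByMonic_eq_self_iff hmon).mpr (degH (by simp [degree_one]))]
  refine ⟨X^6+X+1, hmon, ?_, ?_, AdjoinRoot.mk _ (X^2+X+1),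
    IsUnit.of_mul_eq_one _ hinv, ?_, ?_⟩
  · rw [Polynomial.separable_def,
      show derivative (X^6+X+1 : (ZMod 2)[X]) = 1 by simp [derivative_X_pow]; rw [← C_1, ← C_add, show (5 : ZMod 2) + 1 = 0 by decide, C_0]]
    exact isCoprime_one_right
  · compute_degree!
  · rintro c ⟨u, rfl⟩ hne
    have hu0 : u ≠ 0 := by
      rintro rfl
      exact hne (by funext i; fin_cases i <;> simp)
    have hau0 : AdjoinRoot.mk (X^6+X+1 : (ZMod 2)[X]) (X^2+X+1) * u ≠ 0 := by
      intro h0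
      apply hu0
      calc u = (AdjoinRoot.mk (X^6+X+1 : (ZMod 2)[X]) (X^5+X^3+X^2)) *
            (AdjoinRoot.mk (X^6+X+1 : (ZMod 2)[X]) (X^2+X+1) * u) := by
              rw [← mul_assoc, mul_comm (AdjoinRoot.mk _ (X^5+X^3+X^2)), hinv, one_mul]
        _ = 0 := by rw [h0, mul_zero]
    set p := AdjoinRoot.modByMonicHom hmon u with hp
    set p2 := AdjoinRoot.modByMonicHom hmon
      (AdjoinRoot.mk (X^6+X+1 : (ZMod 2)[X]) (X^2+X+1) * u) with hp2def
    have mkp : AdjoinRoot.mk (X^6+X+1 : (ZMod 2)[X]) p = u := AdjoinRoot.mk_leftInverse hmon u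
    have hp0 : p ≠ 0 := fun h0 => hu0 (by rw [← mkp, h0, map_zero])
    have mkp2 : AdjoinRoot.mk (X^6+X+1 : (ZMod 2)[X]) p2 =
        AdjoinRoot.mk (X^6+X+1 : (ZMod 2)[X]) (X^2+X+1) * u :=
      AdjoinRoot.mk_leftInverse hmon _
    have hp20 : p2 ≠ 0 := fun h0 => hau0 (by rw [← mkp2, h0, map_zero])
    have hw : qpcWeight hmon ![u, AdjoinRoot.mk (X^6+X+1 : (ZMod 2)[X]) (X^2+X+1) * u]
        = p.support.card + p2.support.card := by
      simp [qpcWeight, Fin.sum_univ_two, hp, hp2def]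
    rw [hw]
    have hc1 : 1 ≤ p.support.card := by
      rcases Nat.eq_zero_or_pos p.support.card with h0 | h1
      · exact absurd (Polynomial.support_eq_empty.mp (Finset.card_eq_zero.mp h0)) hp0
      · exact h1
    have hc2 : 1 ≤ p2.support.card := by
      rcases Nat.eq_zero_or_pos p2.support.card with h0 | h1
      · exact absurd (Polynomial.support_eq_empty.mp (Finset.card_eq_zero.mp h0)) hp20
      · exact h1
    have claimA : p.support.card = 1 → 3 ≤ p2.support.card := by
      intro h1
      obtain ⟨k, x, hx, hpk⟩ := Polynomial.card_support_eq_one.mp h1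
      rw [zmod2_ne_zero x hx, map_one, one_mul] at hpk
      have hk : k < 6 := by
        have hlt := key u
        rw [← hp, hpk, degree_X_pow, hdeg] at hlt
        exact_mod_cast hlt
      have hu : u = AdjoinRoot.mk (X^6+X+1 : (ZMod 2)[X]) (X^k) := by
        rw [← mkp, hpk]
      have hp2 : p2 = ((X^2+X+1) * X^k : (ZMod 2)[X]) %ₘ (X^6+X+1 : (ZMod 2)[X]) := by
        rw [hp2def, hu, ← map_mul, AdjoinRoot.modByMonicHom_mk]
      interval_cases k
      · rw [hp2]; exact wA0
      · rw [hp2]; exact wA1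
      · rw [hp2]; exact wA2
      · rw [hp2]; exact wA3
      · rw [hp2]; exact wA4
      · rw [hp2]; exact wA5
    have claimB : p2.support.card = 1 → 3 ≤ p.support.card := by
      intro h1
      obtain ⟨k, x, hx, hpk⟩ := Polynomial.card_support_eq_one.mp h1
      rw [zmod2_ne_zero x hx, map_one, one_mul] at hpk
      have hk : k < 6 := by
        have hlt := key (AdjoinRoot.mk (X^6+X+1 : (ZMod 2)[X]) (X^2+X+1) * u)
        rw [← hp2def, hpk, degree_X_pow, hdeg] at hlt
        exact_mod_cast hlt
      have hu : u = AdjoinRoot.mk (X^6+X+1 : (ZMod 2)[X]) ((X^5+X^3+X^2) * X^k) := by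
        have : AdjoinRoot.mk (X^6+X+1 : (ZMod 2)[X]) (X^2+X+1) * u =
            AdjoinRoot.mk (X^6+X+1 : (ZMod 2)[X]) (X^k) := by rw [← mkp2, hpk]
        rw [map_mul]
        calc u = (AdjoinRoot.mk (X^6+X+1 : (ZMod 2)[X]) (X^5+X^3+X^2)) *
              (AdjoinRoot.mk (X^6+X+1 : (ZMod 2)[X]) (X^2+X+1) * u) := by
                rw [← mul_assoc, mul_comm (AdjoinRoot.mk _ (X^5+X^3+X^2)), hinv, one_mul]
          _ = _ := by rw [this]
      have hp2 : p = ((X^5+X^3+X^2) * X^k : (ZMod 2)[X]) %ₘ (X^6+X+1 : (ZMod 2)[X]) := by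
        rw [hp, hu, AdjoinRoot.modByMonicHom_mk]
      interval_cases k
      · rw [hp2]; exact wB0
      · rw [hp2]; exact wB1
      · rw [hp2]; exact wB2
      · rw [hp2]; exact wB3
      · rw [hp2]; exact wB4
      · rw [hp2]; exact wB5
    by_cases e1 : p.support.card = 1
    · have := claimA e1
      omega
    by_cases e2 : p2.support.card = 1
    · have := claimB e2
      omega
    omega
  · refine ⟨![1, AdjoinRoot.mk (X^6+X+1 : (ZMod 2)[X]) (X^2+X+1) * 1], ⟨1, rfl⟩, ?_, ?_⟩
    · intro h0
      have h1 := congrFun h0 0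
      simp only [Matrix.cons_val_zero, Pi.zero_apply] at h1
      have := hone
      rw [h1, map_zero] at this
      exact one_ne_zero this.symm
    · have hq : AdjoinRoot.modByMonicHom hmon
          (AdjoinRoot.mk (X^6+X+1 : (ZMod 2)[X]) (X^2+X+1)) = X^2+X+1 := by
        rw [AdjoinRoot.modByMonicHom_mk,
          (Polynomial.modByMonic_eq_self_iff hmon).mpr (degH (by compute_degree!))]
      have hsupp : (X^2+X+1 : (ZMod 2)[X]).support = {2, 1, 0} := by
        rw [show (X^2+X+1 : (ZMod 2)[X]) = C 1 * X^0 + C 1 * X^1 + C 1 * X^2 by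
          simp; ring]
        rw [Polynomial.support_trinomial (by omega) (by omega) one_ne_zero one_ne_zero
          one_ne_zero]
        decide
      have hone' : ((1 : (ZMod 2)[X])).support = {0} := by
        rw [← Polynomial.C_1]; exact Polynomial.support_C one_ne_zero
      simp only [qpcWeight, Fin.sum_univ_two, Matrix.cons_val_zero, Matrix.cons_val_one,
        Matrix.head_cons, mul_one]
      rw [hone, hq, hsupp, hone']
      decide
end
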